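/- arXiv:1701.05094 — 4 statements merged into one kernel-verified Lean document; each statement's English description precedes it below -/
import Mathlib

section
/- If A and B are polyhedra in ℝⁿ, then A ∩ B is a polyhedron in ℝⁿ. -/
open Set

/-- A polytope in ℝⁿ: the convex hull of a finite set of points. -/
def IsPolytope {n : ℕ} (s : Set (Fin n → ℝ)) : Prop :=
  ∃ V : Finset (Fin n → ℝ), s = convexHull ℝ (V : Set (Fin n → ℝ))

/-- A polyhedron in ℝⁿ: a finite union of polytopes. -/
def IsPolyhedron {n : ℕ} (P : Set (Fin n → ℝ)) : Prop :=
  ∃ S : Set (Set (Fin n → ℝ)), S.Finite ∧ (∀ s ∈ S, IsPolytope s) ∧ P = ⋃₀ S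

/-- A simplex in ℝⁿ: the convex hull of a nonempty finite affinely independent set. -/
def IsSimplex {n : ℕ} (s : Set (Fin n → ℝ)) : Prop :=
  ∃ V : Finset (Fin n → ℝ), V.Nonempty ∧
    AffineIndependent ℝ (fun x : {x : Fin n → ℝ // x ∈ V} => x.val) ∧
    s = convexHull ℝ (V : Set (Fin n → ℝ))

/-- `IsFaceOf s t`: `t` is a simplex with vertex set `W` and `s` is the convex hull
of a nonempty subset of `W`. -/
def IsFaceOf {n : ℕ} (s t : Set (Fin n → ℝ)) : Prop :=
  ∃ W V : Finset (Fin n → ℝ), W.Nonempty ∧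
    AffineIndependent ℝ (fun x : {x : Fin n → ℝ // x ∈ W} => x.val) ∧
    t = convexHull ℝ (W : Set (Fin n → ℝ)) ∧
    V.Nonempty ∧ V ⊆ W ∧ s = convexHull ℝ (V : Set (Fin n → ℝ))

/-- A triangulation in ℝⁿ: a finite set of simplices closed under taking faces, such that
any two members intersect in a common face (or not at all). -/
structure IsTriangulation {n : ℕ} (K : Set (Set (Fin n → ℝ))) : Prop where
  finite : K.Finite
  simplex : ∀ s ∈ K, IsSimplex s
  face_mem : ∀ s ∈ K, ∀ t, IsFaceOf t s → t ∈ K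
  inter : ∀ s ∈ K, ∀ t ∈ K, s ∩ t = ∅ ∨ (IsFaceOf (s ∩ t) s ∧ IsFaceOf (s ∩ t) t)

/-- A set of simplices closed under taking faces. -/
def FaceClosed {n : ℕ} (D : Set (Set (Fin n → ℝ))) : Prop :=
  ∀ s ∈ D, ∀ t, IsFaceOf t s → t ∈ D

/-- A `K`-definable polyhedron: the union of a face-closed subset of `K`. -/
def SigmaDefinable {n : ℕ} (K : Set (Set (Fin n → ℝ))) (C : Set (Fin n → ℝ)) : Prop :=
  ∃ D ⊆ K, FaceClosed D ∧ C = ⋃₀ D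

/-- A `K`-definable open set: the complement in `|K| = ⋃₀ K` of a `K`-definable polyhedron. -/
def SigmaDefOpen {n : ℕ} (K : Set (Set (Fin n → ℝ))) (O : Set (Fin n → ℝ)) : Prop :=
  ∃ C, SigmaDefinable K C ∧ O = ⋃₀ K \ C

/-- The open star of a simplex `s` in a triangulation `K`. -/
def openStar {n : ℕ} (K : Set (Set (Fin n → ℝ))) (s : Set (Fin n → ℝ)) : Set (Fin n → ℝ) :=
  ⋃ t ∈ {t ∈ K | s ⊆ t}, intrinsicInterior ℝ t

/-- The interior of `S` in the subspace topology of `P`, viewed as a subset of ℝⁿ. -/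
def intSub {n : ℕ} (P S : Set (Fin n → ℝ)) : Set (Fin n → ℝ) :=
  Subtype.val '' interior (Subtype.val ⁻¹' S : Set P)

/-- An open subpolyhedron of a polyhedron `P`: a subset of `P` whose complement in `P`
is a polyhedron. -/
def IsOpenSubpoly {n : ℕ} (P O : Set (Fin n → ℝ)) : Prop :=
  O ⊆ P ∧ IsPolyhedron (P \ O)

/-- `s` is a simplex with exactly `k` (affinely independent) vertices. -/
def SimplexWithCard {n : ℕ} (s : Set (Fin n → ℝ)) (k : ℕ) : Prop :=
  ∃ V : Finset (Fin n → ℝ), V.Nonempty ∧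
    AffineIndependent ℝ (fun x : {x : Fin n → ℝ // x ∈ V} => x.val) ∧
    s = convexHull ℝ (V : Set (Fin n → ℝ)) ∧ V.card = k

/-- `P` contains a simplex with `d+1` affinely independent vertices, and no simplex with more;
i.e. the polyhedron `P` has dimension exactly `d`. -/
def PolyDimEq {n : ℕ} (P : Set (Fin n → ℝ)) (d : ℕ) : Prop :=
  (∃ V : Finset (Fin n → ℝ), V.Nonempty ∧
      AffineIndependent ℝ (fun x : {x : Fin n → ℝ // x ∈ V} => x.val) ∧
      convexHull ℝ (V : Set (Fin n → ℝ)) ⊆ P ∧ V.card = d + 1) ∧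
  (∀ V : Finset (Fin n → ℝ),
      AffineIndependent ℝ (fun x : {x : Fin n → ℝ // x ∈ V} => x.val) →
      convexHull ℝ (V : Set (Fin n → ℝ)) ⊆ P → V.card ≤ d + 1)

/-- The polyhedron `P` has dimension at most `d`. -/
def PolyDimLE {n : ℕ} (P : Set (Fin n → ℝ)) (d : ℕ) : Prop :=
  ∀ V : Finset (Fin n → ℝ),
    AffineIndependent ℝ (fun x : {x : Fin n → ℝ // x ∈ V} => x.val) →
    convexHull ℝ (V : Set (Fin n → ℝ)) ⊆ P → V.card ≤ d + 1

/-- The triangulation `K` has combinatorial dimension exactly `d`. -/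
def TriangDimEq {n : ℕ} (K : Set (Set (Fin n → ℝ))) (d : ℕ) : Prop :=
  (∃ s ∈ K, SimplexWithCard s (d + 1)) ∧
  (∀ s ∈ K, ∀ k, SimplexWithCard s k → k ≤ d + 1)

/-- The bounded-depth terms: `bdTerm P k V = V k ∪ (V k ⇨ bdTerm P (k-1) V)`,
where `U ⇨ W = int_P ((P \ U) ∪ W)` is the Heyting implication of open subsets of `P`. -/
def bdTerm {n : ℕ} (P : Set (Fin n → ℝ)) :
    (k : ℕ) → (Fin (k + 1) → Set (Fin n → ℝ)) → Set (Fin n → ℝ)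
  | 0, V => V 0 ∪ intSub P (P \ V 0)
  | k + 1, V => V (Fin.last (k + 1)) ∪
      intSub P ((P \ V (Fin.last (k + 1))) ∪ bdTerm P k (fun i => V i.castSucc))

/-- The finite poset `A` has depth exactly `d`: it has a chain of cardinality `d+1`
and no longer chain. -/
def depthEq (A : Type) [PartialOrder A] (d : ℕ) : Prop :=
  (∃ C : Finset A, IsChain (· ≤ ·) (C : Set A) ∧ C.card = d + 1) ∧
  (∀ C : Finset A, IsChain (· ≤ ·) (C : Set A) → C.card ≤ d + 1)

/-- An upper set of the poset `(K, ⊆)`. -/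
def UpperSetOf {n : ℕ} (K U : Set (Set (Fin n → ℝ))) : Prop :=
  U ⊆ K ∧ ∀ s ∈ U, ∀ t ∈ K, s ⊆ t → t ∈ U

/-- The map sending an upper set of a triangulation to the union of the relative
interiors of its members. -/
def gammaUp {n : ℕ} (U : Set (Set (Fin n → ℝ))) : Set (Fin n → ℝ) :=
  ⋃ s ∈ U, intrinsicInterior ℝ s
lemma finite_extremePoints_halfspaces {E : Type*} [AddCommGroup E] [Module ℝ E]
    {ι : Type*} [Fintype ι] (f : ι → E → ℝ) (hf : ∀ i, IsLinearMap ℝ (f i)) (c : ι → ℝ) :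
    (({x : E | ∀ i, f i x ≤ c i}).extremePoints ℝ).Finite := by
  classical
  set P := {x : E | ∀ i, f i x ≤ c i} with hP
  have inj : Set.InjOn (fun x => {i | f i x = c i}) (P.extremePoints ℝ) := by
    rintro x hx y hy (hxy : {i | f i x = c i} = {i | f i y = c i})
    by_contra hne
    obtain ⟨hxP, hxext⟩ := hx
    set d := x - y with hd
    have hd0 : d ≠ 0 := sub_ne_zero.2 hne
    set s : Finset ι := Finset.univ.filter (fun i => f i d ≠ 0) with hs
    have hlt : ∀ i ∈ s, f i x < c i := by
      intro i hi
      rcases lt_or_eq_of_le (hxP i) with h | h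
      · exact h
      · exfalso
        have h2 : f i y = c i := by
          have h3 : i ∈ {i | f i x = c i} := h
          rw [hxy] at h3; exact h3
        have h4 : f i d = 0 := by
          rw [hd, (hf i).map_sub, h, h2, sub_self]
        exact (Finset.mem_filter.1 hi).2 h4
    set g : ι → ℝ := fun i => (c i - f i x) / |f i d| with hg
    set F : Finset ℝ := insert 1 (s.image g) with hF
    have hFne : F.Nonempty := ⟨1, Finset.mem_insert_self _ _⟩
    set ε := F.min' hFne with hε
    have hεpos : 0 < ε := by
      rw [hε, Finset.lt_min'_iff]
      intro b hb
      rcases Finset.mem_insert.1 hb with rfl | hb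
      · norm_num
      · obtain ⟨i, hi, rfl⟩ := Finset.mem_image.1 hb
        have h1 := hlt i hi
        have h2 : f i d ≠ 0 := (Finset.mem_filter.1 hi).2
        exact div_pos (sub_pos.2 h1) (abs_pos.2 h2)
    have hbound : ∀ i, ε * |f i d| ≤ c i - f i x := by
      intro i
      by_cases h : f i d = 0
      · simp [h, sub_nonneg.2 (hxP i)]
      · have hi : i ∈ s := by simp [hs, h]
        have h1 : ε ≤ g i :=
          Finset.min'_le _ _ (Finset.mem_insert_of_mem (Finset.mem_image_of_mem g hi))
        have habs : 0 < |f i d| := abs_pos.2 h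
        calc ε * |f i d| ≤ g i * |f i d| := by nlinarith
          _ = c i - f i x := div_mul_cancel₀ _ habs.ne'
    have hmem : ∀ i, f i (x + ε • d) ≤ c i ∧ f i (x - ε • d) ≤ c i := by
      intro i
      have h1 : f i (x + ε • d) = f i x + ε * f i d := by
        rw [(hf i).map_add, (hf i).map_smul, smul_eq_mul]
      have h2 : f i (x - ε • d) = f i x - ε * f i d := by
        rw [(hf i).map_sub, (hf i).map_smul, smul_eq_mul]
      have h3 := mul_le_mul_of_nonneg_left (le_abs_self (f i d)) hεpos.le
      have h4 := mul_le_mul_of_nonneg_left (neg_abs_le (f i d)) hεpos.le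
      have h5 := hbound i
      constructor
      · rw [h1]; linarith
      · rw [h2]; nlinarith
    have hx1 : x + ε • d ∈ P := fun i => (hmem i).1
    have hx2 : x - ε • d ∈ P := fun i => (hmem i).2
    have hseg : x ∈ openSegment ℝ (x + ε • d) (x - ε • d) :=
      ⟨1/2, 1/2, by norm_num, by norm_num, by norm_num, by module⟩
    have heq := hxext hx1 hx2 hseg
    have : ε • d = 0 := by
      have := congrArg (· - x) heq
      simpa using this
    rcases smul_eq_zero.1 this with h | h
    · exact hεpos.ne' h
    · exact hd0 h
  exact Set.Finite.of_finite_image (Set.toFinite _) inj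

lemma eq_convexHull_extremePoints {E : Type*} [NormedAddCommGroup E] [NormedSpace ℝ E]
    [FiniteDimensional ℝ E] {s : Set E} (hcomp : IsCompact s) (hconv : Convex ℝ s)
    (hfin : (s.extremePoints ℝ).Finite) :
    s = convexHull ℝ (s.extremePoints ℝ) := by
  have h := closure_convexHull_extremePoints hcomp hconv
  rw [IsClosed.closure_eq (hfin.isCompact_convexHull ℝ).isClosed] at h
  exact h.symm

lemma isPolytope_inter {n : ℕ} {s t : Set (Fin n → ℝ)}
    (hs : IsPolytope s) (ht : IsPolytope t) : IsPolytope (s ∩ t) := by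
  classical
  obtain ⟨V, rfl⟩ := hs
  obtain ⟨W, rfl⟩ := ht
  -- weight space
  set T : (({x // x ∈ V} ⊕ {x // x ∈ W}) → ℝ) → (Fin n → ℝ) :=
    fun l => ∑ v : {x // x ∈ V}, l (Sum.inl v) • (v : Fin n → ℝ) with hT
  have hTlin : IsLinearMap ℝ T := by
    constructor
    · intro a b; simp [hT, add_smul, Finset.sum_add_distrib]
    · intro c a; simp [hT, Finset.smul_sum, smul_smul]
  set P : Set (({x // x ∈ V} ⊕ {x // x ∈ W}) → ℝ) := {l | (∀ a, 0 ≤ l a) ∧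
      ∑ v : {x // x ∈ V}, l (Sum.inl v) = 1 ∧
      ∑ w : {x // x ∈ W}, l (Sum.inr w) = 1 ∧
      ∀ j, ∑ v : {x // x ∈ V}, l (Sum.inl v) * (v : Fin n → ℝ) j
         = ∑ w : {x // x ∈ W}, l (Sum.inr w) * (w : Fin n → ℝ) j} with hPdef
  -- the linear constraints
  set f : (({x // x ∈ V} ⊕ {x // x ∈ W}) ⊕ (Bool × Bool) ⊕ (Fin n × Bool)) →
      (({x // x ∈ V} ⊕ {x // x ∈ W}) → ℝ) → ℝ :=
    fun i l => match i with
      | Sum.inl a => -l a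
      | Sum.inr (Sum.inl (true, true)) => ∑ v : {x // x ∈ V}, l (Sum.inl v)
      | Sum.inr (Sum.inl (true, false)) => -∑ v : {x // x ∈ V}, l (Sum.inl v)
      | Sum.inr (Sum.inl (false, true)) => ∑ w : {x // x ∈ W}, l (Sum.inr w)
      | Sum.inr (Sum.inl (false, false)) => -∑ w : {x // x ∈ W}, l (Sum.inr w)
      | Sum.inr (Sum.inr (j, true)) =>
          ∑ v : {x // x ∈ V}, l (Sum.inl v) * (v : Fin n → ℝ) j
            - ∑ w : {x // x ∈ W}, l (Sum.inr w) * (w : Fin n → ℝ) j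
      | Sum.inr (Sum.inr (j, false)) =>
          ∑ w : {x // x ∈ W}, l (Sum.inr w) * (w : Fin n → ℝ) j
            - ∑ v : {x // x ∈ V}, l (Sum.inl v) * (v : Fin n → ℝ) j with hfdef
  set c : (({x // x ∈ V} ⊕ {x // x ∈ W}) ⊕ (Bool × Bool) ⊕ (Fin n × Bool)) → ℝ :=
    fun i => match i with
      | Sum.inl _ => 0
      | Sum.inr (Sum.inl (_, true)) => (1:ℝ)
      | Sum.inr (Sum.inl (_, false)) => (-1:ℝ)
      | Sum.inr (Sum.inr _) => 0 with hcdef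
  have hf : ∀ i, IsLinearMap ℝ (f i) := by
    rintro (a | ⟨(_|_), (_|_)⟩ | ⟨j, (_|_)⟩) <;> constructor <;> intro u w <;>
      · simp only [hfdef, Pi.add_apply, Pi.smul_apply, smul_eq_mul, add_mul,
          Finset.sum_add_distrib, Finset.mul_sum, mul_assoc, neg_add_rev, mul_sub, mul_neg]
        try ring
  have hPf : P = {l | ∀ i, f i l ≤ c i} := by
    ext l
    simp only [hPdef, Set.mem_setOf_eq]
    constructor
    · rintro ⟨h0, hV, hW, hj⟩ i
      rcases i with a | ⟨(_|_), (_|_)⟩ | ⟨j, (_|_)⟩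
      · exact neg_nonpos.2 (h0 a)
      · show -∑ w : {x // x ∈ W}, l (Sum.inr w) ≤ -1
        rw [hW]
      · show ∑ w : {x // x ∈ W}, l (Sum.inr w) ≤ 1
        rw [hW]
      · show -∑ v : {x // x ∈ V}, l (Sum.inl v) ≤ -1
        rw [hV]
      · show ∑ v : {x // x ∈ V}, l (Sum.inl v) ≤ 1
        rw [hV]
      · show ∑ w : {x // x ∈ W}, l (Sum.inr w) * (w : Fin n → ℝ) j
            - ∑ v : {x // x ∈ V}, l (Sum.inl v) * (v : Fin n → ℝ) j ≤ 0
        rw [hj j]; simp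
      · show ∑ v : {x // x ∈ V}, l (Sum.inl v) * (v : Fin n → ℝ) j
            - ∑ w : {x // x ∈ W}, l (Sum.inr w) * (w : Fin n → ℝ) j ≤ 0
        rw [hj j]; simp
    · intro h
      have h0 : ∀ a, 0 ≤ l a := fun a => neg_nonpos.1 (h (Sum.inl a))
      have hV : ∑ v : {x // x ∈ V}, l (Sum.inl v) = 1 := by
        have h1 : ∑ v : {x // x ∈ V}, l (Sum.inl v) ≤ 1 := h (Sum.inr (Sum.inl (true, true)))
        have h2 : -∑ v : {x // x ∈ V}, l (Sum.inl v) ≤ -1 := h (Sum.inr (Sum.inl (true, false)))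
        linarith
      have hW : ∑ w : {x // x ∈ W}, l (Sum.inr w) = 1 := by
        have h1 : ∑ w : {x // x ∈ W}, l (Sum.inr w) ≤ 1 := h (Sum.inr (Sum.inl (false, true)))
        have h2 : -∑ w : {x // x ∈ W}, l (Sum.inr w) ≤ -1 := h (Sum.inr (Sum.inl (false, false)))
        linarith
      refine ⟨h0, hV, hW, fun j => ?_⟩
      have h1 : ∑ v : {x // x ∈ V}, l (Sum.inl v) * (v : Fin n → ℝ) j
            - ∑ w : {x // x ∈ W}, l (Sum.inr w) * (w : Fin n → ℝ) j ≤ 0 :=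
        h (Sum.inr (Sum.inr (j, true)))
      have h2 : ∑ w : {x // x ∈ W}, l (Sum.inr w) * (w : Fin n → ℝ) j
            - ∑ v : {x // x ∈ V}, l (Sum.inl v) * (v : Fin n → ℝ) j ≤ 0 :=
        h (Sum.inr (Sum.inr (j, false)))
      linarith
  have hconv : Convex ℝ P := by
    rw [hPf, Set.setOf_forall]
    exact convex_iInter fun i => convex_halfSpace_le (hf i) (c i)
  have hclosed : IsClosed P := by
    rw [hPf, Set.setOf_forall]
    refine isClosed_iInter fun i => isClosed_le ?_ continuous_const
    exact (IsLinearMap.mk' (f i) (hf i)).continuous_of_finiteDimensional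
  have hsub : P ⊆ Set.Icc (0 : ({x // x ∈ V} ⊕ {x // x ∈ W}) → ℝ) 1 := by
    rintro l ⟨h0, hV, hW, -⟩
    constructor
    · intro a; exact h0 a
    · intro a
      rcases a with v | w
      · calc l (Sum.inl v) ≤ ∑ v : {x // x ∈ V}, l (Sum.inl v) :=
              Finset.single_le_sum (fun i _ => h0 (Sum.inl i)) (Finset.mem_univ v)
          _ = 1 := hV
      · calc l (Sum.inr w) ≤ ∑ w : {x // x ∈ W}, l (Sum.inr w) :=
              Finset.single_le_sum (fun i _ => h0 (Sum.inr i)) (Finset.mem_univ w)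
          _ = 1 := hW
  have hcomp : IsCompact P := IsCompact.of_isClosed_subset isCompact_Icc hclosed hsub
  have hfin : (P.extremePoints ℝ).Finite := by
    rw [hPf]; exact finite_extremePoints_halfspaces f hf c
  have hPeq : P = convexHull ℝ (P.extremePoints ℝ) :=
    eq_convexHull_extremePoints hcomp hconv hfin
  have himg : T '' P = convexHull ℝ (V : Set (Fin n → ℝ)) ∩ convexHull ℝ (W : Set (Fin n → ℝ)) := by
    apply Set.Subset.antisymm
    · rintro x ⟨l, ⟨h0, hV, hW, hj⟩, rfl⟩
      constructor
      · have := Finset.centerMass_mem_convexHull (Finset.univ : Finset {x // x ∈ V})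
          (w := fun v => l (Sum.inl v)) (z := fun v => (v : Fin n → ℝ))
          (fun i _ => h0 (Sum.inl i)) (by rw [hV]; norm_num) (fun i _ => i.2)
        rwa [Finset.centerMass, hV, inv_one, one_smul] at this
      · have hTl : T l = ∑ w : {x // x ∈ W}, l (Sum.inr w) • (w : Fin n → ℝ) := by
          funext j
          simp only [hT, Finset.sum_apply, Pi.smul_apply, smul_eq_mul]
          exact hj j
        have := Finset.centerMass_mem_convexHull (Finset.univ : Finset {x // x ∈ W})
          (w := fun w => l (Sum.inr w)) (z := fun w => (w : Fin n → ℝ))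
          (fun i _ => h0 (Sum.inr i)) (by rw [hW]; norm_num) (fun i _ => i.2)
        rwa [Finset.centerMass, hW, inv_one, one_smul, ← hTl] at this
    · rintro x ⟨hxV, hxW⟩
      rw [Finset.convexHull_eq] at hxV hxW
      obtain ⟨w₁, h10, h11, h1c⟩ := hxV
      obtain ⟨w₂, h20, h21, h2c⟩ := hxW
      have h1x : ∑ y ∈ V, w₁ y • y = x := by
        rw [← h1c, Finset.centerMass_eq_of_sum_1 _ _ h11]; rfl
      have h2x : ∑ y ∈ W, w₂ y • y = x := by
        rw [← h2c, Finset.centerMass_eq_of_sum_1 _ _ h21]; rfl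
      refine ⟨Sum.elim (fun v => w₁ v.val) (fun w => w₂ w.val), ⟨?_, ?_, ?_, ?_⟩, ?_⟩
      · rintro (v | w)
        · exact h10 _ v.2
        · exact h20 _ w.2
      · simpa using (Finset.sum_coe_sort V w₁).trans h11
      · simpa using (Finset.sum_coe_sort W w₂).trans h21
      · intro j
        have hl : ∑ v : {x // x ∈ V}, w₁ v.val * (v : Fin n → ℝ) j = x j := by
          rw [Finset.sum_coe_sort V (fun y => w₁ y * y j), ← congrFun h1x j]
          simp [Finset.sum_apply]
        have hr : ∑ w : {x // x ∈ W}, w₂ w.val * (w : Fin n → ℝ) j = x j := by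
          rw [Finset.sum_coe_sort W (fun y => w₂ y * y j), ← congrFun h2x j]
          simp [Finset.sum_apply]
        simp only [Sum.elim_inl, Sum.elim_inr]
        rw [hl, hr]
      · simp only [hT, Sum.elim_inl]
        rw [Finset.sum_coe_sort V (fun y => w₁ y • y)]
        exact h1x
  refine ⟨(hfin.image T).toFinset, ?_⟩
  rw [Set.Finite.coe_toFinset, ← hTlin.image_convexHull, ← hPeq, himg]

/-- If `A` and `B` are polyhedra in ℝⁿ, then `A ∩ B` is a polyhedron in ℝⁿ. -/
theorem polyhedron_inter {n : ℕ} {A B : Set (Fin n → ℝ)}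
    (hA : IsPolyhedron A) (hB : IsPolyhedron B) :
    IsPolyhedron (A ∩ B) := by
  obtain ⟨S, hSfin, hSpoly, rfl⟩ := hA
  obtain ⟨S', hS'fin, hS'poly, rfl⟩ := hB
  refine ⟨(fun p : Set (Fin n → ℝ) × Set (Fin n → ℝ) => p.1 ∩ p.2) '' (S ×ˢ S'),
    (hSfin.prod hS'fin).image _, ?_, ?_⟩
  · rintro u ⟨⟨s, t⟩, hmem, rfl⟩
    rw [Set.mem_prod] at hmem
    exact isPolytope_inter (hSpoly _ hmem.1) (hS'poly _ hmem.2)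
  · ext x
    simp only [Set.mem_inter_iff, Set.mem_sUnion, Set.mem_image, Set.mem_prod, Prod.exists]
    constructor
    · rintro ⟨⟨s, hs, hx⟩, ⟨t, ht, hx'⟩⟩
      exact ⟨s ∩ t, ⟨s, t, ⟨hs, ht⟩, rfl⟩, hx, hx'⟩
    · rintro ⟨u, ⟨s, t, ⟨hs, ht⟩, rfl⟩, hx, hx'⟩
      exact ⟨⟨s, hs, hx⟩, ⟨t, ht, hx'⟩⟩
end

section
/- Let Σ be a triangulation of a polyhedron P ⊆ ℝⁿ (i.e. ⋃Σ = P), let Q ⊆ P be a polyhedron, and suppose Σ_Q := {σ ∈ Σ : σ ⊆ Q} triangulates Q (i.e. ⋃Σ_Q = Q). Put Σ* := {σ ∈ Σ : there exists τ ∈ Σ with τ ⊄ Q and σ a face of τ}. Then cl(P \ Q) = ⋃Σ*; in particular, cl(P \ Q) is a polyhedron. -/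
open Set

/-- Membership in the convex hull of a finset via weights. -/
lemma mem_hull_iff (W : Finset (Fin n → ℝ)) (x : Fin n → ℝ) :
    x ∈ convexHull ℝ (W : Set (Fin n → ℝ)) ↔
      ∃ a : (Fin n → ℝ) → ℝ, (∀ y ∈ W, 0 ≤ a y) ∧ ∑ y ∈ W, a y = 1 ∧
        ∑ y ∈ W, a y • y = x := by
  rw [Finset.convexHull_eq]
  constructor
  · rintro ⟨a, h0, h1, h2⟩
    refine ⟨a, h0, h1, ?_⟩
    rw [← h2, Finset.centerMass_eq_of_sum_1 _ _ h1]
    rfl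
  · rintro ⟨a, h0, h1, h2⟩
    refine ⟨a, h0, h1, ?_⟩
    rw [Finset.centerMass_eq_of_sum_1 _ _ h1]
    exact h2

/-- Uniqueness of barycentric coordinates for an affinely independent finset. -/
lemma bary_unique {W : Finset (Fin n → ℝ)}
    (hW : AffineIndependent ℝ (fun x : {x : Fin n → ℝ // x ∈ W} => x.val))
    {a b : (Fin n → ℝ) → ℝ} (ha : ∑ y ∈ W, a y = 1) (hb : ∑ y ∈ W, b y = 1)
    (hab : ∑ y ∈ W, a y • y = ∑ y ∈ W, b y • y) :
    ∀ y ∈ W, a y = b y := by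
  rw [affineIndependent_iff] at hW
  have key := hW Finset.univ (fun i => a i.val - b i.val) ?_ ?_
  · intro y hy
    have := key ⟨y, hy⟩ (Finset.mem_univ _)
    linarith
  · rw [Finset.sum_coe_sort W (fun y => a y - b y)]
    rw [Finset.sum_sub_distrib, ha, hb]; ring
  · have : ∑ i : {x : Fin n → ℝ // x ∈ W}, (a i.val - b i.val) • i.val
        = ∑ y ∈ W, (a y - b y) • y := Finset.sum_coe_sort W (fun y => (a y - b y) • y)
    rw [this]
    simp only [sub_smul, Finset.sum_sub_distrib, hab, sub_self]

/-- If a barycentric coordinate equals 1, the point is that vertex. -/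
lemma eq_of_coeff_one {W : Finset (Fin n → ℝ)} {a : (Fin n → ℝ) → ℝ} {w x : Fin n → ℝ}
    (hw : w ∈ W) (h0 : ∀ y ∈ W, 0 ≤ a y) (h1 : ∑ y ∈ W, a y = 1) (haw : a w = 1)
    (hx : ∑ y ∈ W, a y • y = x) : x = w := by
  have hrest : ∑ y ∈ W.erase w, a y = 0 := by
    have := Finset.add_sum_erase W a hw
    rw [haw] at this; linarith
  have hzero : ∀ y ∈ W.erase w, a y = 0 := by
    intro y hy
    have := (Finset.sum_eq_zero_iff_of_nonneg
      (fun y hy => h0 y (Finset.mem_of_mem_erase hy))).mp hrest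
    exact this y hy
  rw [← hx, ← Finset.add_sum_erase W (fun y => a y • y) hw, haw, one_smul,
    Finset.sum_eq_zero (fun y hy => by rw [hzero y hy, zero_smul]), add_zero]

/-- Each vertex of an affinely independent finset is an extreme point of its hull. -/
lemma vertex_extreme {W : Finset (Fin n → ℝ)}
    (hW : AffineIndependent ℝ (fun x : {x : Fin n → ℝ // x ∈ W} => x.val))
    {w : Fin n → ℝ} (hw : w ∈ W) :
    w ∈ Set.extremePoints ℝ (convexHull ℝ (W : Set (Fin n → ℝ))) := by
  rw [mem_extremePoints]
  refine ⟨subset_convexHull ℝ _ hw, ?_⟩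
  intro x₁ hx₁ x₂ hx₂ hseg
  obtain ⟨c, hc0, hc1, hcx⟩ := (mem_hull_iff W x₁).mp hx₁
  obtain ⟨d, hd0, hd1, hdx⟩ := (mem_hull_iff W x₂).mp hx₂
  obtain ⟨p, q, hp, hq, hpq, hw'⟩ := hseg
  -- w = p • x₁ + q • x₂
  set e : (Fin n → ℝ) → ℝ := fun y => p * c y + q * d y with he
  have he1 : ∑ y ∈ W, e y = 1 := by
    simp only [he, Finset.sum_add_distrib, ← Finset.mul_sum, hc1, hd1]
    simpa using hpq
  have hew : ∑ y ∈ W, e y • y = w := by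
    rw [← hw', ← hcx, ← hdx]
    rw [Finset.smul_sum, Finset.smul_sum, ← Finset.sum_add_distrib]
    refine Finset.sum_congr rfl fun y hy => ?_
    simp only [he, add_smul, smul_smul]
  -- indicator weights for w
  set f : (Fin n → ℝ) → ℝ := fun y => if y = w then 1 else 0 with hf
  have hf1 : ∑ y ∈ W, f y = 1 := by
    simp only [hf]
    rw [Finset.sum_ite_eq' W w (fun _ => (1:ℝ))]
    simp [hw]
  have hfw : ∑ y ∈ W, f y • y = w := by
    have : ∀ y ∈ W, f y • y = if y = w then w else 0 := by
      intro y hy; simp only [hf]; split <;> simp_all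
    rw [Finset.sum_congr rfl this, Finset.sum_ite_eq' W w (fun _ => w)]
    simp [hw]
  have huniq := bary_unique hW he1 hf1 (by rw [hew, hfw])
  have hew1 : p * c w + q * d w = 1 := by
    have := huniq w hw
    simpa [he, hf] using this
  have hcw1 : c w ≤ 1 := by
    calc c w ≤ ∑ y ∈ W, c y := Finset.single_le_sum hc0 hw
    _ = 1 := hc1
  have hdw1 : d w ≤ 1 := by
    calc d w ≤ ∑ y ∈ W, d y := Finset.single_le_sum hd0 hw
    _ = 1 := hd1
  have hcw : c w = 1 := by nlinarith
  have hdw : d w = 1 := by nlinarith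
  exact ⟨eq_of_coeff_one hw hc0 hc1 hcw hcx, eq_of_coeff_one hw hd0 hd1 hdw hdx⟩

/-- Uniqueness of the vertex set of a simplex. -/
lemma vertex_set_unique {W W' : Finset (Fin n → ℝ)}
    (hW : AffineIndependent ℝ (fun x : {x : Fin n → ℝ // x ∈ W} => x.val))
    (hW' : AffineIndependent ℝ (fun x : {x : Fin n → ℝ // x ∈ W'} => x.val))
    (h : convexHull ℝ (W : Set (Fin n → ℝ)) = convexHull ℝ (W' : Set (Fin n → ℝ))) :
    W = W' := by
  have h1 : (W : Set (Fin n → ℝ)) ⊆ (W' : Set (Fin n → ℝ)) := by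
    intro w hw
    have := vertex_extreme hW hw
    rw [h] at this
    exact extremePoints_convexHull_subset this
  have h2 : (W' : Set (Fin n → ℝ)) ⊆ (W : Set (Fin n → ℝ)) := by
    intro w hw
    have := vertex_extreme hW' hw
    rw [← h] at this
    exact extremePoints_convexHull_subset this
  exact_mod_cast subset_antisymm h1 h2


/-- Density lemma: a simplex of `K` not contained in `Q` lies in the closure of its
complement of `Q`. -/
lemma simplex_subset_closure_diff {n : ℕ} {K : Set (Set (Fin n → ℝ))}
    (hK : IsTriangulation K) {Q : Set (Fin n → ℝ)}
    (hQ : ⋃₀ {s ∈ K | s ⊆ Q} = Q) {t : Set (Fin n → ℝ)} (ht : t ∈ K) (htQ : ¬ t ⊆ Q) :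
    t ⊆ closure (t \ Q) := by
  obtain ⟨W, hWne, hWai, htW⟩ := hK.simplex t ht
  intro x hx
  obtain ⟨a, ha0, ha1, hax⟩ := (mem_hull_iff W x).mp (htW ▸ hx)
  set m : ℝ := (W.card : ℝ) with hm
  have hm0 : 0 < m := by
    have := Finset.card_pos.mpr hWne
    positivity
  set c : Fin n → ℝ := ∑ y ∈ W, m⁻¹ • y with hc
  have key : ∀ θ : ℝ, 0 < θ → θ ≤ 1 → (1 - θ) • x + θ • c ∈ t \ Q := by
    intro θ hθ0 hθ1
    set a' : (Fin n → ℝ) → ℝ := fun y => (1 - θ) * a y + θ * m⁻¹ with ha'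
    have ha'0 : ∀ y ∈ W, 0 < a' y := by
      intro y hy
      have h1 : 0 ≤ (1 - θ) * a y := mul_nonneg (by linarith) (ha0 y hy)
      have h2 : 0 < θ * m⁻¹ := by positivity
      simp only [ha']
      linarith
    have ha'1 : ∑ y ∈ W, a' y = 1 := by
      simp only [ha']
      rw [Finset.sum_add_distrib, ← Finset.mul_sum, ha1, Finset.sum_const, nsmul_eq_mul]
      rw [hm] at hm0 ⊢
      field_simp
      ring
    have ha'x : ∑ y ∈ W, a' y • y = (1 - θ) • x + θ • c := by
      simp only [ha', add_smul, mul_smul]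
      rw [Finset.sum_add_distrib, ← Finset.smul_sum, ← Finset.smul_sum, hax, hc]
    have hu_t : (1 - θ) • x + θ • c ∈ t := by
      rw [htW, mem_hull_iff]
      exact ⟨a', fun y hy => (ha'0 y hy).le, ha'1, ha'x⟩
    refine ⟨hu_t, fun hmem => ?_⟩
    rw [← hQ] at hmem
    obtain ⟨s, ⟨hsK, hsQ⟩, hus⟩ := hmem
    have hne : (s ∩ t).Nonempty := ⟨_, hus, hu_t⟩
    rcases hK.inter s hsK t ht with h | ⟨_, hface⟩
    · rw [h] at hne; exact Set.not_nonempty_empty hne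
    obtain ⟨W', V', hW'ne, hW'ai, htW', hV'ne, hV'W', hst_eq⟩ := hface
    have hWW' : W' = W := vertex_set_unique hW'ai hWai (by rw [← htW', ← htW])
    subst hWW'
    have hV'neW : V' ≠ W' := by
      rintro rfl
      apply htQ
      have : t ⊆ s := by
        rw [htW, ← hst_eq]; exact Set.inter_subset_left
      exact fun y hy => hsQ (this hy)
    obtain ⟨w0, hw0W, hw0V'⟩ :=
      Finset.exists_of_ssubset (lt_of_le_of_ne hV'W' hV'neW)
    have humem : (1 - θ) • x + θ • c ∈ convexHull ℝ (V' : Set (Fin n → ℝ)) := by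
      rw [← hst_eq]; exact ⟨hus, hu_t⟩
    obtain ⟨b, hb0, hb1, hbx⟩ := (mem_hull_iff V' _).mp humem
    set b' : (Fin n → ℝ) → ℝ := fun y => if y ∈ V' then b y else 0 with hb'
    have hb'1 : ∑ y ∈ W', b' y = 1 := by
      rw [← Finset.sum_subset hV'W' (fun y _ hy => by simp [hb', hy])]
      rw [← hb1]
      exact Finset.sum_congr rfl fun y hy => by simp [hb', hy]
    have hb'x : ∑ y ∈ W', b' y • y = (1 - θ) • x + θ • c := by
      rw [← Finset.sum_subset hV'W' (fun y _ hy => by simp [hb', hy]), ← hbx]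
      exact Finset.sum_congr rfl fun y hy => by simp [hb', hy]
    have := bary_unique hWai ha'1 hb'1 (by rw [ha'x, hb'x])
    have h0 := this w0 hw0W
    rw [hb'] at h0
    simp only [hw0V', if_false] at h0
    exact absurd h0 (ne_of_gt (ha'0 w0 hw0W))
  have htd : Filter.Tendsto (fun k : ℕ => (1 - 1 / ((k : ℝ) + 1)) • x + (1 / ((k : ℝ) + 1)) • c)
      Filter.atTop (nhds x) := by
    have h0 : Filter.Tendsto (fun k : ℕ => 1 / ((k : ℝ) + 1)) Filter.atTop (nhds 0) :=
      tendsto_one_div_add_atTop_nhds_zero_nat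
    have h2 : Filter.Tendsto (fun k : ℕ => (1 - 1 / ((k : ℝ) + 1)) • x)
        Filter.atTop (nhds ((1 - 0 : ℝ) • x)) :=
      Filter.Tendsto.smul (tendsto_const_nhds.sub h0) tendsto_const_nhds
    have h3 : Filter.Tendsto (fun k : ℕ => (1 / ((k : ℝ) + 1)) • c)
        Filter.atTop (nhds ((0 : ℝ) • c)) :=
      Filter.Tendsto.smul h0 tendsto_const_nhds
    simpa using h2.add h3
  refine mem_closure_of_tendsto htd (Filter.Eventually.of_forall fun k => ?_)
  refine key _ (by positivity) ?_
  rw [div_le_one (by positivity)]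
  linarith [Nat.cast_nonneg (α := ℝ) k]


/-- Let `K` triangulate the polyhedron `P`, let `Q ⊆ P` be a polyhedron
triangulated by `{s ∈ K : s ⊆ Q}`. Then `cl (P \ Q)` equals the union of all simplices of `K`
that are faces of some simplex not contained in `Q`; in particular `cl (P \ Q)` is a
polyhedron. -/
theorem closure_diff_eq_sUnion {n : ℕ} (K : Set (Set (Fin n → ℝ))) (hK : IsTriangulation K)
    (P Q : Set (Fin n → ℝ)) (hP : ⋃₀ K = P)
    (hQpoly : IsPolyhedron Q) (hQP : Q ⊆ P)
    (hQ : ⋃₀ {s ∈ K | s ⊆ Q} = Q) :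
    closure (P \ Q) = ⋃₀ {s ∈ K | ∃ t ∈ K, ¬ t ⊆ Q ∧ IsFaceOf s t} ∧
    IsPolyhedron (closure (P \ Q)) := by
  set S : Set (Set (Fin n → ℝ)) := {s ∈ K | ∃ t ∈ K, ¬ t ⊆ Q ∧ IsFaceOf s t} with hS
  have hSK : S ⊆ K := fun s hs => hs.1
  have hSfin : S.Finite := hK.finite.subset hSK
  have hclosed : ∀ s ∈ K, IsClosed s := by
    intro s hs
    obtain ⟨V, _, _, rfl⟩ := hK.simplex s hs
    exact (V.finite_toSet).isClosed_convexHull (𝕜 := ℝ)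
  have hUclosed : IsClosed (⋃₀ S) := by
    rw [Set.sUnion_eq_biUnion]
    exact hSfin.isClosed_biUnion fun s hs => hclosed s (hSK hs)
  have hsub : P \ Q ⊆ ⋃₀ S := by
    rintro x ⟨hxP, hxQ⟩
    rw [← hP] at hxP
    obtain ⟨s, hsK, hxs⟩ := hxP
    have hsQ : ¬ s ⊆ Q := fun h => hxQ (h hxs)
    obtain ⟨V, hVne, hVai, hsV⟩ := hK.simplex s hsK
    exact ⟨s, ⟨hsK, s, hsK, hsQ, V, V, hVne, hVai, hsV, hVne, subset_rfl, hsV⟩, hxs⟩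
  have hsup : ⋃₀ S ⊆ closure (P \ Q) := by
    rintro x ⟨s, ⟨hsK, t, htK, htQ, hface⟩, hxs⟩
    obtain ⟨W, V, hWne, hWai, htW, hVne, hVW, hsV⟩ := hface
    have hst : s ⊆ t := by
      rw [htW, hsV]
      exact convexHull_mono (by exact_mod_cast hVW)
    have h1 : t ⊆ closure (t \ Q) := simplex_subset_closure_diff hK hQ htK htQ
    have h2 : t \ Q ⊆ P \ Q := by
      have : t ⊆ P := by rw [← hP]; exact fun y hy => ⟨t, htK, hy⟩
      exact fun y ⟨hy1, hy2⟩ => ⟨this hy1, hy2⟩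
    exact closure_mono h2 (h1 (hst hxs))
  have heq : closure (P \ Q) = ⋃₀ S :=
    (closure_minimal hsub hUclosed).antisymm hsup
  refine ⟨heq, ?_⟩
  rw [heq]
  refine ⟨S, hSfin, fun s hs => ?_, rfl⟩
  obtain ⟨V, _, _, hsV⟩ := hK.simplex s (hSK hs)
  exact ⟨V, hsV⟩
end

section
/- If Q₁ and Q₂ are polyhedra in ℝⁿ, then cl(Q₂ \ Q₁) is a polyhedron in ℝⁿ. -/
open Set

section Aux
variable {n : ℕ}
local notation "E" => (Fin n → ℝ)

private lemma affine_apply_sum (g : E →ᵃ[ℝ] ℝ) {α : Type*} (s : Finset α)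
    (w : α → ℝ) (v : α → E) (hw : ∑ i ∈ s, w i = 1) :
    g (∑ i ∈ s, w i • v i) = ∑ i ∈ s, w i * g (v i) := by
  have hg : ∀ y : E, g y = g.linear y + g 0 := by
    intro y
    conv_lhs => rw [show y = y +ᵥ (0 : E) by simp]
    rw [g.map_vadd]
    rfl
  have h1 : ∀ i ∈ s, w i * g (v i) = w i * g.linear (v i) + w i * g 0 := by
    intro i _
    rw [hg (v i)]; ring
  rw [Finset.sum_congr rfl h1, Finset.sum_add_distrib, ← Finset.sum_mul, hw, one_mul,
    hg (∑ i ∈ s, w i • v i), map_sum]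
  simp only [map_smul, smul_eq_mul]

private lemma convex_affine_le (g : E →ᵃ[ℝ] ℝ) : Convex ℝ {x : E | g x ≤ 0} := by
  have : {x : E | g x ≤ 0} = g ⁻¹' (Iic 0) := rfl
  rw [this]
  exact (convex_Iic (0:ℝ)).affine_preimage g

private lemma closed_affine_le (g : E →ᵃ[ℝ] ℝ) : IsClosed {x : E | g x ≤ 0} :=
  IsClosed.preimage g.continuous_of_finiteDimensional isClosed_Iic


private lemma cut_lemma (V : Finset E) (g : E →ᵃ[ℝ] ℝ) :
    ∃ W : Finset E, convexHull ℝ (W : Set E) = convexHull ℝ (V : Set E) ∩ {x | g x ≤ 0} := by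
  classical
  set t : E × E → ℝ := fun p => -g p.1 / (g p.2 - g p.1) with ht
  set W₀ : Finset E := ((V ×ˢ V).filter fun p => g p.1 < 0 ∧ 0 < g p.2).image
      (fun p => AffineMap.lineMap p.1 p.2 (t p)) with hW₀
  set W : Finset E := V.filter (fun v => g v ≤ 0) ∪ W₀ with hW
  set U : Finset E := V ∪ W₀ with hU
  -- basic facts about cut points
  have hlin : ∀ a b : E, ∀ c : ℝ, g (AffineMap.lineMap a b c) = (1 - c) * g a + c * g b := by
    intro a b c
    rw [AffineMap.apply_lineMap, AffineMap.lineMap_apply_module, smul_eq_mul, smul_eq_mul]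
  have htmem : ∀ a b : E, g a < 0 → 0 < g b → 0 < t (a, b) ∧ t (a, b) < 1 := by
    intro a b ha hb
    constructor
    · exact div_pos (by linarith) (by linarith)
    · rw [div_lt_one (by linarith)]; linarith
  have hgcut : ∀ a b : E, g a < 0 → 0 < g b → g (AffineMap.lineMap a b (t (a, b))) = 0 := by
    intro a b ha hb
    rw [hlin]
    have hne : g b - g a ≠ 0 := by linarith
    rw [ht]
    field_simp
    ring
  have hW₀g : ∀ p ∈ W₀, g p = 0 := by
    intro p hp
    rw [hW₀, Finset.mem_image] at hp
    obtain ⟨q, hq, rfl⟩ := hp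
    rw [Finset.mem_filter] at hq
    exact hgcut q.1 q.2 hq.2.1 hq.2.2
  have hW₀V : ∀ p ∈ W₀, p ∈ convexHull ℝ (V : Set E) := by
    intro p hp
    rw [hW₀, Finset.mem_image] at hp
    obtain ⟨q, hq, rfl⟩ := hp
    rw [Finset.mem_filter, Finset.mem_product] at hq
    obtain ⟨⟨h1, h2⟩, h3, h4⟩ := hq
    have hseg : AffineMap.lineMap q.1 q.2 (t q) ∈ segment ℝ q.1 q.2 := by
      rw [segment_eq_image_lineMap]
      exact mem_image_of_mem _ ⟨le_of_lt (htmem q.1 q.2 h3 h4).1, le_of_lt (htmem q.1 q.2 h3 h4).2⟩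
    exact (convex_convexHull ℝ (V : Set E)).segment_subset
      (subset_convexHull ℝ _ h1) (subset_convexHull ℝ _ h2) hseg
  have hWsub : (W : Set E) ⊆ convexHull ℝ (V : Set E) ∩ {x | g x ≤ 0} := by
    intro v hv
    rw [hW] at hv
    simp only [Finset.coe_union, mem_union, Finset.mem_coe, Finset.mem_filter] at hv
    rcases hv with ⟨hv1, hv2⟩ | hv
    · exact ⟨subset_convexHull ℝ _ (Finset.mem_coe.2 hv1), hv2⟩
    · exact ⟨hW₀V _ hv, le_of_eq (hW₀g _ hv)⟩
  -- key induction
  have key : ∀ m : ℕ, ∀ w : E → ℝ, (∀ v ∈ U, 0 ≤ w v) → (∑ v ∈ U, w v) = 1 →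
      ((U.filter fun v => w v ≠ 0 ∧ g v ≠ 0).card = m) →
      g (∑ v ∈ U, w v • v) ≤ 0 → (∑ v ∈ U, w v • v) ∈ convexHull ℝ (W : Set E) := by
    intro m
    induction m using Nat.strong_induction_on with
    | _ m IH =>
      intro w hw0 hw1 hcard hgx
      by_cases hpos : ∃ b ∈ U, w b ≠ 0 ∧ 0 < g b
      · obtain ⟨b, hbU, hwb, hgb⟩ := hpos
        have hwb' : 0 < w b := lt_of_le_of_ne (hw0 b hbU) (Ne.symm hwb)
        have hsum : ∑ v ∈ U, w v * g v ≤ 0 := by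
          have := affine_apply_sum g U w id hw1
          simp only [id] at this
          rwa [this] at hgx
        have hneg : ∃ a ∈ U, w a ≠ 0 ∧ g a < 0 := by
          by_contra hcon
          push_neg at hcon
          have hlt : (0:ℝ) < ∑ v ∈ U, w v * g v := by
            apply Finset.sum_pos'
            · intro v hv
              rcases eq_or_ne (w v) 0 with h | h
              · simp [h]
              · exact mul_nonneg (hw0 v hv) (hcon v hv h)
            · exact ⟨b, hbU, mul_pos hwb' hgb⟩
          linarith
        obtain ⟨a, haU, hwa, hga⟩ := hneg
        have hwa' : 0 < w a := lt_of_le_of_ne (hw0 a haU) (Ne.symm hwa)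
        have haV : a ∈ V := by
          rcases Finset.mem_union.1 haU with h | h
          · exact h
          · exact absurd (hW₀g a h) (by linarith)
        have hbV : b ∈ V := by
          rcases Finset.mem_union.1 hbU with h | h
          · exact h
          · exact absurd (hW₀g b h) (by linarith)
        set s₀ : ℝ := t (a, b) with hs₀def
        obtain ⟨hs₀pos, hs₀lt⟩ := htmem a b hga hgb
        set p : E := AffineMap.lineMap a b s₀ with hpdef
        have hpW₀ : p ∈ W₀ := by
          rw [hW₀, Finset.mem_image]
          exact ⟨(a, b), Finset.mem_filter.2 ⟨Finset.mem_product.2 ⟨haV, hbV⟩, hga, hgb⟩, rfl⟩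
        have hpU : p ∈ U := Finset.mem_union.2 (Or.inr hpW₀)
        have hgp : g p = 0 := hgcut a b hga hgb
        have hab : a ≠ b := fun h => by rw [h] at hga; linarith
        have hap : a ≠ p := fun h => by rw [← h] at hgp; linarith
        have hbp : b ≠ p := fun h => by rw [← h] at hgp; linarith
        have hpmod : p = (1 - s₀) • a + s₀ • b := by
          rw [hpdef, AffineMap.lineMap_apply_module]
        set τ : ℝ := min (w a / (1 - s₀)) (w b / s₀) with hτdef
        have hτpos : 0 < τ := lt_min (div_pos hwa' (by linarith)) (div_pos hwb' hs₀pos)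
        have hτa : τ * (1 - s₀) ≤ w a := by
          rw [← le_div_iff₀ (by linarith : (0:ℝ) < 1 - s₀)]
          exact min_le_left _ _
        have hτb : τ * s₀ ≤ w b := by
          rw [← le_div_iff₀ hs₀pos]
          exact min_le_right _ _
        set w' : E → ℝ := fun v => w v - (τ * (1 - s₀)) * (if v = a then 1 else 0)
            - (τ * s₀) * (if v = b then 1 else 0) + τ * (if v = p then 1 else 0) with hw'def
        have hw'a : w' a = w a - τ * (1 - s₀) := by simp [hw'def, hab, hap]
        have hw'b : w' b = w b - τ * s₀ := by simp [hw'def, Ne.symm hab, hbp]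
        have hw'p : w' p = w p + τ := by simp [hw'def, Ne.symm hap, Ne.symm hbp]
        have hw'other : ∀ v, v ≠ a → v ≠ b → v ≠ p → w' v = w v := by
          intro v h1 h2 h3; simp [hw'def, h1, h2, h3]
        have hw'0 : ∀ v ∈ U, 0 ≤ w' v := by
          intro v hv
          rcases eq_or_ne v a with rfl | h1
          · rw [hw'a]; linarith
          rcases eq_or_ne v b with rfl | h2
          · rw [hw'b]; linarith
          rcases eq_or_ne v p with rfl | h3
          · rw [hw'p]; have := hw0 p hpU; linarith
          · rw [hw'other v h1 h2 h3]; exact hw0 v hv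
        have hsum_ite : ∀ c : E, c ∈ U → ∑ v ∈ U, (if v = c then (1:ℝ) else 0) = 1 := by
          intro c hc
          rw [Finset.sum_ite_eq' U c (fun _ => (1:ℝ))]
          simp [hc]
        have hw'1 : ∑ v ∈ U, w' v = 1 := by
          simp only [hw'def]
          rw [Finset.sum_add_distrib, Finset.sum_sub_distrib, Finset.sum_sub_distrib,
            ← Finset.mul_sum, ← Finset.mul_sum, ← Finset.mul_sum,
            hsum_ite a haU, hsum_ite b hbU, hsum_ite p hpU, hw1]
          ring
        have hvec : ∑ v ∈ U, w' v • v = ∑ v ∈ U, w v • v := by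
          have hpt : ∀ v, w' v • v = w v • v - (τ * (1 - s₀)) • (if v = a then a else 0)
              - (τ * s₀) • (if v = b then b else 0) + τ • (if v = p then p else 0) := by
            intro v
            simp only [hw'def]
            rcases eq_or_ne v a with rfl | h1
            · simp [hab, hap, sub_smul, add_smul, smul_smul]
            rcases eq_or_ne v b with rfl | h2
            · simp [Ne.symm hab, hbp, sub_smul, add_smul, smul_smul]
            rcases eq_or_ne v p with rfl | h3
            · simp [Ne.symm hap, Ne.symm hbp, sub_smul, add_smul, smul_smul]
            · simp [h1, h2, h3]
          rw [Finset.sum_congr rfl (fun v _ => hpt v), Finset.sum_add_distrib,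
            Finset.sum_sub_distrib, Finset.sum_sub_distrib,
            ← Finset.smul_sum, ← Finset.smul_sum, ← Finset.smul_sum,
            Finset.sum_ite_eq' U a (fun _ => a), Finset.sum_ite_eq' U b (fun _ => b),
            Finset.sum_ite_eq' U p (fun _ => p), if_pos haU, if_pos hbU, if_pos hpU,
            hpmod]
          rw [smul_add, smul_smul, smul_smul]
          abel
        -- one of w' a, w' b is zero
        have hzero : w' a = 0 ∨ w' b = 0 := by
          rcases min_cases (w a / (1 - s₀)) (w b / s₀) with ⟨h, _⟩ | ⟨h, _⟩
          · left
            have h1s : (1:ℝ) - s₀ ≠ 0 := by linarith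
            rw [hw'a, hτdef, h]
            field_simp
            ring
          · right
            have h1s : s₀ ≠ 0 := by linarith
            rw [hw'b, hτdef, h]
            field_simp
            ring
        have hssub : (U.filter fun v => w' v ≠ 0 ∧ g v ≠ 0) ⊂
            (U.filter fun v => w v ≠ 0 ∧ g v ≠ 0) := by
          constructor
          · intro v hv
            rw [Finset.mem_filter] at hv ⊢
            obtain ⟨hvU, hv1, hv2⟩ := hv
            refine ⟨hvU, ?_, hv2⟩
            rcases eq_or_ne v a with rfl | h1
            · exact hwa
            rcases eq_or_ne v b with rfl | h2
            · exact hwb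
            rcases eq_or_ne v p with rfl | h3
            · exact absurd hgp hv2
            · rwa [← hw'other v h1 h2 h3]
          · intro hsub
            rcases hzero with h | h
            · have : a ∈ U.filter fun v => w' v ≠ 0 ∧ g v ≠ 0 :=
                hsub (Finset.mem_filter.2 ⟨haU, hwa, by linarith⟩)
              rw [Finset.mem_filter] at this
              exact this.2.1 h
            · have : b ∈ U.filter fun v => w' v ≠ 0 ∧ g v ≠ 0 :=
                hsub (Finset.mem_filter.2 ⟨hbU, hwb, by linarith⟩)
              rw [Finset.mem_filter] at this
              exact this.2.1 h
        have hlt : (U.filter fun v => w' v ≠ 0 ∧ g v ≠ 0).card < m := by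
          rw [← hcard]
          exact Finset.card_lt_card hssub
        have := IH _ hlt w' hw'0 hw'1 rfl (by rwa [hvec])
        rwa [hvec] at this
      · -- no positive-g vertex in the support
        push_neg at hpos
        have hx : ∑ v ∈ U, w v • v = (U.filter fun v => w v ≠ 0).centerMass w id := by
          rw [Finset.centerMass_filter_ne_zero, Finset.centerMass_eq_of_sum_1 _ _ hw1]
          simp
        rw [hx]
        apply Finset.centerMass_mem_convexHull
        · intro v hv
          exact hw0 v (Finset.mem_filter.1 hv).1
        · rw [Finset.sum_filter_ne_zero, hw1]
          exact one_pos
        · intro v hv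
          rw [Finset.mem_filter] at hv
          obtain ⟨hvU, hvw⟩ := hv
          have hgv : g v ≤ 0 := hpos v hvU hvw
          rcases Finset.mem_union.1 hvU with h | h
          · exact Finset.mem_coe.2 (Finset.mem_union.2 (Or.inl (Finset.mem_filter.2 ⟨h, hgv⟩)))
          · exact Finset.mem_coe.2 (Finset.mem_union.2 (Or.inr h))
  refine ⟨W, subset_antisymm ?_ ?_⟩
  · exact convexHull_min hWsub ((convex_convexHull ℝ _).inter (convex_affine_le g))
  · rintro x ⟨hxV, hxg⟩
    rw [Finset.convexHull_eq] at hxV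
    obtain ⟨w, hw0, hw1, hx⟩ := hxV
    set w' : E → ℝ := fun v => if v ∈ V then w v else 0 with hw'def
    have hVU : V ⊆ U := Finset.subset_union_left
    have h1 : ∑ v ∈ U, w' v = 1 := by
      rw [← Finset.sum_subset hVU (fun v _ hv => by simp [hw'def, hv])]
      rw [← hw1]
      exact Finset.sum_congr rfl fun v hv => by simp [hw'def, hv]
    have h2 : ∑ v ∈ U, w' v • v = x := by
      rw [← Finset.sum_subset hVU (fun v _ hv => by simp [hw'def, hv])]
      rw [← hx, Finset.centerMass_eq_of_sum_1 _ _ hw1]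
      exact Finset.sum_congr rfl fun v hv => by simp [hw'def, hv]
    have hmem := key _ w' (fun v _ => by
        simp only [hw'def]
        split_ifs with hh
        · exact hw0 v hh
        · exact le_refl 0) h1 rfl (by rwa [h2])
    rwa [h2] at hmem

private lemma simplex_Hrep (T : Finset E)
    (hT : AffineIndependent ℝ (fun x : {x : E // x ∈ T} => x.val)) :
    ∃ G : Finset (E →ᵃ[ℝ] ℝ), convexHull ℝ (T : Set E) = {x | ∀ g ∈ G, g x ≤ 0} := by
  classical
  have hT' : AffineIndependent ℝ ((↑) : (↑(T : Set E) : Sort _) → E) := hT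
  obtain ⟨s, hTs, hs, hsp⟩ := exists_subset_affineIndependent_affineSpan_eq_top hT'
  have hsfin : s.Finite := finite_set_of_fin_dim_affineIndependent ℝ hs
  haveI := hsfin.fintype
  let b : AffineBasis s ℝ E := ⟨(↑), hs, by rwa [Subtype.range_coe]⟩
  refine ⟨((Finset.univ : Finset s).image fun i => -(b.coord i)) ∪
      (((Finset.univ : Finset s).filter fun i => i.val ∉ T).image fun i => b.coord i), ?_⟩
  have hdesc : ∀ x : E, (∀ g ∈ ((Finset.univ : Finset s).image fun i => -(b.coord i)) ∪
      (((Finset.univ : Finset s).filter fun i => i.val ∉ T).image fun i => b.coord i), g x ≤ 0) ↔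
      (∀ i : s, 0 ≤ b.coord i x) ∧ (∀ i : s, i.val ∉ T → b.coord i x ≤ 0) := by
    intro x
    constructor
    · intro h
      constructor
      · intro i
        have := h (-(b.coord i)) (Finset.mem_union_left _ (Finset.mem_image_of_mem _
          (Finset.mem_univ i)))
        simpa using this
      · intro i hi
        exact h (b.coord i) (Finset.mem_union_right _ (Finset.mem_image_of_mem _
          (Finset.mem_filter.2 ⟨Finset.mem_univ i, hi⟩)))
    · rintro ⟨h1, h2⟩ g hg
      rcases Finset.mem_union.1 hg with hg | hg
      · obtain ⟨i, _, rfl⟩ := Finset.mem_image.1 hg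
        simpa using h1 i
      · obtain ⟨i, hi, rfl⟩ := Finset.mem_image.1 hg
        exact h2 i (Finset.mem_filter.1 hi).2
  apply subset_antisymm
  · apply convexHull_min
    · intro v hv
      rw [mem_setOf_eq, hdesc v]
      have hvs : v ∈ s := hTs hv
      have hvb : v = b ⟨v, hvs⟩ := rfl
      constructor
      · intro i
        rw [hvb, b.coord_apply]
        split_ifs <;> norm_num
      · intro i hi
        have hne : i ≠ ⟨v, hvs⟩ := by
          intro h
          rw [h] at hi
          exact hi (Finset.mem_coe.1 hv)
        rw [hvb, b.coord_apply_ne hne]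
    · have hset : {x : E | ∀ g ∈ ((Finset.univ : Finset s).image fun i => -(b.coord i)) ∪
          (((Finset.univ : Finset s).filter fun i => i.val ∉ T).image fun i => b.coord i),
          g x ≤ 0} = ⋂ g ∈ (((Finset.univ : Finset s).image fun i => -(b.coord i)) ∪
          (((Finset.univ : Finset s).filter fun i => i.val ∉ T).image fun i => b.coord i) :
          Finset (_ →ᵃ[ℝ] ℝ)), {x : E | g x ≤ 0} := by
        ext x; simp
      rw [hset]
      refine convex_iInter₂ fun g _ => ?_
      have : {x : E | g x ≤ 0} = g ⁻¹' (Iic 0) := rfl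
      rw [this]
      exact (convex_Iic (0:ℝ)).affine_preimage g
  · intro x hx
    rw [mem_setOf_eq, hdesc] at hx
    obtain ⟨h1, h2⟩ := hx
    set T' : Finset s := (Finset.univ : Finset s).filter fun i => i.val ∈ T with hT'def
    set w : s → ℝ := fun i => b.coord i x with hwdef
    have hw0 : ∀ i ∉ T', w i = 0 := by
      intro i hi
      rw [hT'def, Finset.mem_filter] at hi
      push_neg at hi
      exact le_antisymm (h2 i (hi (Finset.mem_univ i))) (h1 i)
    have hwsum : ∑ i ∈ T', w i = 1 := by
      rw [Finset.sum_subset (Finset.subset_univ T') (fun i _ hi => hw0 i hi)]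
      exact b.sum_coord_apply_eq_one x
    have hxcomb : T'.affineCombination ℝ b w = x := by
      have hind : (↑T' : Set s).indicator w = w := by
        funext i
        by_cases hi : i ∈ T'
        · simp [Set.indicator_apply, hi]
        · simp [Set.indicator_apply, hi, hw0 i hi]
      have := Finset.affineCombination_indicator_subset w b (Finset.subset_univ T')
      rw [hind] at this
      rw [this]
      exact b.affineCombination_coord_eq_self x
    rw [← hxcomb, affineCombination_eq_centerMass hwsum]
    apply Finset.centerMass_mem_convexHull
    · intro i _
      exact h1 i
    · rw [hwsum]; exact one_pos
    · intro i hi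
      rw [hT'def, Finset.mem_filter] at hi
      exact hi.2

private def HRep (Q : Set E) : Prop :=
  ∃ 𝒢 : Finset (Finset (E →ᵃ[ℝ] ℝ)), Q = ⋃ G ∈ 𝒢, {x : E | ∀ g ∈ G, g x ≤ 0}

private lemma hrep_empty : HRep (∅ : Set E) := ⟨∅, by simp⟩

private lemma hrep_union {A B : Set E} (hA : HRep A) (hB : HRep B) : HRep (A ∪ B) := by
  classical
  obtain ⟨𝒢₁, rfl⟩ := hA
  obtain ⟨𝒢₂, rfl⟩ := hB
  refine ⟨𝒢₁ ∪ 𝒢₂, ?_⟩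
  ext x
  simp only [mem_union, mem_iUnion, Finset.mem_union]
  constructor
  · rintro (⟨G, hG, hx⟩ | ⟨G, hG, hx⟩)
    · exact ⟨G, Or.inl hG, hx⟩
    · exact ⟨G, Or.inr hG, hx⟩
  · rintro ⟨G, hG | hG, hx⟩
    · exact Or.inl ⟨G, hG, hx⟩
    · exact Or.inr ⟨G, hG, hx⟩

private lemma hrep_biUnion {β : Type*} [DecidableEq β] (F : Finset β) (f : β → Set E)
    (h : ∀ b ∈ F, HRep (f b)) : HRep (⋃ b ∈ F, f b) := by
  classical
  induction F using Finset.induction_on with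
  | empty => simpa using hrep_empty
  | insert a F' hb ih =>
    rw [Finset.set_biUnion_insert]
    exact hrep_union (h a (Finset.mem_insert_self a F'))
      (ih fun b hbF => h b (Finset.mem_insert_of_mem hbF))

private lemma hrep_polytope (V : Finset E) : HRep (convexHull ℝ (V : Set E)) := by
  classical
  have hdecomp : convexHull ℝ (V : Set E) = ⋃ t ∈ V.powerset,
      (if AffineIndependent ℝ (fun x : {x : E // x ∈ t} => x.val)
        then convexHull ℝ (t : Set E) else ∅) := by
    rw [convexHull_eq_union (𝕜 := ℝ) (s := (V : Set E))]
    ext x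
    simp only [mem_iUnion, Finset.mem_powerset]
    constructor
    · rintro ⟨t, ht1, ht2, hx⟩
      refine ⟨t, Finset.coe_subset.1 ht1, ?_⟩
      rw [if_pos ht2]
      exact hx
    · rintro ⟨t, ht, hx⟩
      by_cases h2 : AffineIndependent ℝ (fun x : {x : E // x ∈ t} => x.val)
      · rw [if_pos h2] at hx
        exact ⟨t, Finset.coe_subset.2 ht, h2, hx⟩
      · rw [if_neg h2] at hx
        exact absurd hx (notMem_empty x)
  rw [hdecomp]
  apply hrep_biUnion
  intro t _
  by_cases h2 : AffineIndependent ℝ (fun x : {x : E // x ∈ t} => x.val)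
  · rw [if_pos h2]
    obtain ⟨G, hG⟩ := simplex_Hrep t h2
    exact ⟨{G}, by simpa using hG⟩
  · rw [if_neg h2]
    exact hrep_empty

private lemma hrep_polyhedron {Q : Set E} (h : IsPolyhedron Q) : HRep Q := by
  classical
  obtain ⟨S, hfin, hpoly, rfl⟩ := h
  have : ⋃₀ S = ⋃ s ∈ hfin.toFinset, s := by
    ext x
    simp [Set.Finite.mem_toFinset, mem_sUnion]
  rw [this]
  apply hrep_biUnion
  intro s hs
  obtain ⟨V, hV⟩ := hpoly s (hfin.mem_toFinset.1 hs)
  rw [hV]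
  exact hrep_polytope V

private lemma compl_hrep {Q : Set E} (h : HRep Q) :
    ∃ (ι κ : Type) (_ : Fintype ι) (_ : Fintype κ) (A : ι → κ → (E →ᵃ[ℝ] ℝ)),
      Qᶜ = ⋃ i, {x : E | ∀ j, (A i j) x < 0} := by
  classical
  obtain ⟨𝒢, rfl⟩ := h
  refine ⟨(∀ G : {G // G ∈ 𝒢}, {g // g ∈ G.val}), {G // G ∈ 𝒢}, inferInstance, inferInstance,
    fun φ G => -((φ G).val), ?_⟩
  ext x
  simp only [mem_compl_iff, mem_iUnion, mem_setOf_eq, not_exists]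
  constructor
  · intro hx
    have hx' : ∀ G : {G // G ∈ 𝒢}, ∃ g : {g // g ∈ G.val}, 0 < g.val x := by
      intro G
      have h2 := hx G.val G.2
      push_neg at h2
      obtain ⟨g, hg, hgx⟩ := h2
      exact ⟨⟨g, hg⟩, by linarith⟩
    choose φ hφ using hx'
    refine ⟨φ, fun G => ?_⟩
    have := hφ G
    simp only [AffineMap.coe_neg, Pi.neg_apply]
    linarith
  · rintro ⟨φ, hφ⟩ G hG hx
    have := hφ ⟨G, hG⟩
    simp only [AffineMap.coe_neg, Pi.neg_apply] at this
    have h2 := hx ((φ ⟨G, hG⟩).val) (φ ⟨G, hG⟩).2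
    linarith


private lemma cut_list (L : List (E →ᵃ[ℝ] ℝ)) (V : Finset E) :
    ∃ W : Finset E, convexHull ℝ (W : Set E)
      = convexHull ℝ (V : Set E) ∩ {x | ∀ g ∈ L, g x ≤ 0} := by
  induction L with
  | nil => exact ⟨V, by simp⟩
  | cons h L ih =>
    obtain ⟨W', hW'⟩ := ih
    obtain ⟨W, hW⟩ := cut_lemma W' h
    refine ⟨W, ?_⟩
    rw [hW, hW']
    ext x
    simp only [mem_inter_iff, mem_setOf_eq, List.mem_cons]
    constructor
    · rintro ⟨⟨h1, h2⟩, h3⟩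
      exact ⟨h1, fun g hg => by rcases hg with rfl | hg; exacts [h3, h2 g hg]⟩
    · rintro ⟨h1, h2⟩
      exact ⟨⟨h1, fun g hg => h2 g (Or.inr hg)⟩, h2 h (Or.inl rfl)⟩

private lemma closure_piece (V : Finset E) {κ : Type} [Fintype κ] (A : κ → (E →ᵃ[ℝ] ℝ)) :
    ∃ W : Finset E, closure (convexHull ℝ (V : Set E) ∩ {x : E | ∀ j, A j x < 0})
      = convexHull ℝ (W : Set E) := by
  classical
  set S := convexHull ℝ (V : Set E) ∩ {x : E | ∀ j, A j x < 0} with hSdef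
  rcases eq_empty_or_nonempty S with hS | ⟨z, hz⟩
  · exact ⟨∅, by simp [← hSdef, hS]⟩
  set L : List (E →ᵃ[ℝ] ℝ) := (Finset.univ : Finset κ).toList.map A with hLdef
  obtain ⟨W, hW⟩ := cut_list L V
  have hLset : {x : E | ∀ g ∈ L, g x ≤ 0} = {x : E | ∀ j, A j x ≤ 0} := by
    ext x
    simp only [mem_setOf_eq, hLdef, List.mem_map, Finset.mem_toList]
    constructor
    · intro h j
      exact h (A j) ⟨j, Finset.mem_univ j, rfl⟩
    · rintro h g ⟨j, _, rfl⟩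
      exact h j
  rw [hLset] at hW
  refine ⟨W, ?_⟩
  rw [hW]
  apply subset_antisymm
  · apply closure_minimal
    · exact inter_subset_inter_right _ (fun x hx j => le_of_lt (hx j))
    · refine IsClosed.inter (V.finite_toSet.isClosed_convexHull (𝕜 := ℝ)) ?_
      have : {x : E | ∀ j, A j x ≤ 0} = ⋂ j, {x : E | A j x ≤ 0} := by ext; simp
      rw [this]
      exact isClosed_iInter fun j =>
        IsClosed.preimage (A j).continuous_of_finiteDimensional isClosed_Iic
  · rintro x ⟨hxV, hxA⟩
    rw [mem_setOf_eq] at hxA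
    have hlin : ∀ (a b : E) (c : ℝ) (g : E →ᵃ[ℝ] ℝ),
        g (AffineMap.lineMap a b c) = (1 - c) * g a + c * g b := by
      intro a b c g
      rw [AffineMap.apply_lineMap, AffineMap.lineMap_apply_module, smul_eq_mul, smul_eq_mul]
    have key : ∀ t : ℝ, 0 < t → t ≤ 1 → AffineMap.lineMap x z t ∈ S := by
      intro t ht0 ht1
      constructor
      · have : AffineMap.lineMap x z t ∈ segment ℝ x z := by
          rw [segment_eq_image_lineMap]
          exact mem_image_of_mem _ ⟨le_of_lt ht0, ht1⟩
        exact (convex_convexHull ℝ (V : Set E)).segment_subset hxV hz.1 this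
      · intro j
        rw [hlin]
        have h1 : (1 - t) * A j x ≤ 0 :=
          mul_nonpos_of_nonneg_of_nonpos (by linarith) (hxA j)
        have h2 : t * A j z < 0 := mul_neg_of_pos_of_neg ht0 (hz.2 j)
        linarith
    have htend : Filter.Tendsto (fun k : ℕ => AffineMap.lineMap x z (1 / ((k : ℝ) + 1)))
        Filter.atTop (nhds x) := by
      have hc : Continuous (fun c : ℝ => AffineMap.lineMap x z c) := by
        simp only [AffineMap.lineMap_apply_module']
        fun_prop
      have h0 : Filter.Tendsto (fun k : ℕ => 1 / ((k : ℝ) + 1)) Filter.atTop (nhds 0) :=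
        tendsto_one_div_add_atTop_nhds_zero_nat
      have := (hc.tendsto 0).comp h0
      simpa [Function.comp_def] using this
    refine mem_closure_of_tendsto htend (Filter.Eventually.of_forall fun k => ?_)
    apply key
    · positivity
    · rw [div_le_one (by positivity)]
      have : (0:ℝ) ≤ (k:ℝ) := Nat.cast_nonneg k
      linarith

private lemma isPolyhedron_iUnion {ι : Type} [Fintype ι] (f : ι → Set E)
    (h : ∀ i, IsPolyhedron (f i)) : IsPolyhedron (⋃ i, f i) := by
  choose S hfin hpoly heq using h
  refine ⟨⋃ i, S i, finite_iUnion hfin, ?_, ?_⟩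
  · intro s hs
    obtain ⟨i, hi⟩ := mem_iUnion.1 hs
    exact hpoly i s hi
  · ext x
    simp only [mem_iUnion, mem_sUnion]
    constructor
    · rintro ⟨i, hx⟩
      rw [heq i] at hx
      obtain ⟨t, ht, hxt⟩ := hx
      exact ⟨t, ⟨i, ht⟩, hxt⟩
    · rintro ⟨t, ⟨i, hi⟩, hxt⟩
      exact ⟨i, (heq i).symm ▸ mem_sUnion.2 ⟨t, hi, hxt⟩⟩


end Aux

/-- If `Q₁` and `Q₂` are polyhedra in ℝⁿ, then `cl (Q₂ \ Q₁)` is a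
polyhedron in ℝⁿ. -/
theorem closure_diff_polyhedron {n : ℕ} {Q₁ Q₂ : Set (Fin n → ℝ)}
    (h₁ : IsPolyhedron Q₁) (h₂ : IsPolyhedron Q₂) :
    IsPolyhedron (closure (Q₂ \ Q₁)) := by
  classical
  obtain ⟨ι, κ, hι, hκ, A, hA⟩ := compl_hrep (hrep_polyhedron h₁)
  haveI := hι
  haveI := hκ
  obtain ⟨S₂, hfin, hpoly, rfl⟩ := h₂
  haveI := hfin.fintype
  choose Vf hVf using fun s : S₂ => hpoly s.val s.2
  have hdiff : ⋃₀ S₂ \ Q₁ = ⋃ p : S₂ × ι,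
      (convexHull ℝ (↑(Vf p.1) : Set (Fin n → ℝ)) ∩ {x | ∀ j, A p.2 j x < 0}) := by
    ext x
    simp only [mem_diff, mem_sUnion, mem_iUnion, mem_inter_iff, mem_setOf_eq]
    constructor
    · rintro ⟨⟨s, hs, hxs⟩, hx1⟩
      have hxc : x ∈ Q₁ᶜ := hx1
      rw [hA] at hxc
      obtain ⟨i, hi⟩ := mem_iUnion.1 hxc
      exact ⟨(⟨s, hs⟩, i), by rw [← hVf ⟨s, hs⟩]; exact hxs, hi⟩
    · rintro ⟨⟨s, i⟩, hxs, hxi⟩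
      have hxc : x ∈ Q₁ᶜ := by rw [hA]; exact mem_iUnion.2 ⟨i, hxi⟩
      exact ⟨⟨s.val, s.2, by rw [hVf s]; exact hxs⟩, hxc⟩
  rw [hdiff]
  have hclos : closure (⋃ p : S₂ × ι, (convexHull ℝ (↑(Vf p.1) : Set (Fin n → ℝ))
      ∩ {x | ∀ j, A p.2 j x < 0})) = ⋃ p : S₂ × ι, closure ((convexHull ℝ
      (↑(Vf p.1) : Set (Fin n → ℝ)) ∩ {x | ∀ j, A p.2 j x < 0})) := by
    rw [← biUnion_univ, (finite_univ : (univ : Set (S₂ × ι)).Finite).closure_biUnion,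
      biUnion_univ]
  rw [hclos]
  choose Wf hWf using fun p : S₂ × ι => closure_piece (Vf p.1) (A p.2)
  apply isPolyhedron_iUnion
  intro p
  rw [hWf p]
  exact ⟨{convexHull ℝ (↑(Wf p) : Set (Fin n → ℝ))}, finite_singleton _,
    by rintro s rfl; exact ⟨Wf p, rfl⟩, by simp⟩
end

section
/- Let P ⊆ ℝⁿ be a polyhedron and let U, V be open subpolyhedra of P. Then the Heyting implication of U and V in the lattice of open subsets of P, namely int_P((P \ U) ∪ V), where int_P denotes interior in the subspace topology of P, is again an open subpolyhedron of P. In particular, the open subpolyhedra of P form a Heyting subalgebra of the Heyting algebra of open sets of P. -/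
open Set

section AuxiliaryLemmas

variable {n : ℕ}

lemma affine_apply_sum_s7 {ι : Type*} (f : (Fin n → ℝ) →ᵃ[ℝ] ℝ) (t : Finset ι)
    (w : ι → ℝ) (z : ι → Fin n → ℝ) (hw : ∑ i ∈ t, w i = 1) :
    f (∑ i ∈ t, w i • z i) = ∑ i ∈ t, w i * f (z i) := by
  have hd := AffineMap.decomp f
  have h1 : f (∑ i ∈ t, w i • z i) = f.linear (∑ i ∈ t, w i • z i) + f 0 := by
    rw [hd]; simp
  rw [h1, map_sum]
  have : ∀ i ∈ t, f.linear (w i • z i) = w i * f (z i) - w i * f 0 := by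
    intro i _
    rw [map_smul]
    have : f.linear (z i) = f (z i) - f 0 := by rw [hd]; simp
    rw [this]; ring_nf
  rw [Finset.sum_congr rfl this, Finset.sum_sub_distrib, ← Finset.sum_mul, hw]
  ring

lemma affine_apply_combo2 (f : (Fin n → ℝ) →ᵃ[ℝ] ℝ) (a b : ℝ) (hab : a + b = 1)
    (v w : Fin n → ℝ) : f (a • v + b • w) = a * f v + b * f w := by
  have := affine_apply_sum_s7 f (Finset.univ : Finset (Fin 2)) (![a, b]) (![v, w]) (by simp [Fin.sum_univ_two, hab])
  simpa [Fin.sum_univ_two] using this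

/-- Cutting a polytope with a closed halfspace yields a polytope. -/
lemma polytope_cut (V : Finset (Fin n → ℝ)) (f : (Fin n → ℝ) →ᵃ[ℝ] ℝ) :
    ∃ W : Finset (Fin n → ℝ),
      convexHull ℝ (V : Set (Fin n → ℝ)) ∩ {x | f x ≤ 0} =
        convexHull ℝ (W : Set (Fin n → ℝ)) := by
  classical
  set L : Finset (Fin n → ℝ) := V.filter (fun v => f v ≤ 0) with hLdef
  set Ln : Finset (Fin n → ℝ) := V.filter (fun v => f v < 0) with hLndef
  set L0 : Finset (Fin n → ℝ) := V.filter (fun v => f v = 0) with hL0def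
  set H : Finset (Fin n → ℝ) := V.filter (fun v => 0 < f v) with hHdef
  set p : (Fin n → ℝ) → (Fin n → ℝ) → (Fin n → ℝ) :=
    fun v w => (1 - f v / (f v - f w)) • v + (f v / (f v - f w)) • w with hpdef
  set W : Finset (Fin n → ℝ) := L ∪ (Ln ×ˢ H).image (fun q => p q.1 q.2) with hWdef
  refine ⟨W, ?_⟩
  have hdenom : ∀ v ∈ Ln, ∀ w ∈ H, f v - f w < 0 := by
    intro v hv w hw
    have h1 : f v < 0 := (Finset.mem_filter.mp hv).2
    have h2 : 0 < f w := (Finset.mem_filter.mp hw).2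
    linarith
  have ht01 : ∀ v ∈ Ln, ∀ w ∈ H, 0 ≤ f v / (f v - f w) ∧ f v / (f v - f w) ≤ 1 := by
    intro v hv w hw
    have h1 : f v < 0 := (Finset.mem_filter.mp hv).2
    have h2 : 0 < f w := (Finset.mem_filter.mp hw).2
    constructor
    · exact div_nonneg_of_nonpos h1.le (by linarith)
    · have hd : f v - f w < 0 := by linarith
      have hd' : f v - f w ≠ 0 := ne_of_lt hd
      have h3 : f v / (f v - f w) - 1 = f w / (f v - f w) := by
        field_simp
        ring
      have h4 : f w / (f v - f w) ≤ 0 := div_nonpos_iff.mpr (Or.inl ⟨h2.le, hd.le⟩)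
      linarith
  have hfp : ∀ v ∈ Ln, ∀ w ∈ H, f (p v w) = 0 := by
    intro v hv w hw
    have hd := hdenom v hv w hw
    have hd' : f v - f w ≠ 0 := ne_of_lt hd
    rw [hpdef]
    simp only
    rw [affine_apply_combo2 f _ _ (by ring) v w]
    field_simp
    ring
  -- ⊇ direction
  apply Set.Subset.antisymm
  swap
  · apply convexHull_min
    · intro y hy
      rw [hWdef] at hy
      simp only [Finset.coe_union, Set.mem_union, Finset.coe_image, Set.mem_image,
        Finset.mem_coe, Finset.mem_product] at hy
      rcases hy with hy | ⟨⟨v, w⟩, ⟨hv, hw⟩, rfl⟩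
      · have hv := Finset.mem_filter.mp hy
        exact ⟨subset_convexHull ℝ _ hv.1, hv.2⟩
      · constructor
        · have hseg : p v w ∈ segment ℝ v w := by
            refine ⟨1 - f v / (f v - f w), f v / (f v - f w), ?_, (ht01 v hv w hw).1, by ring, rfl⟩
            have := (ht01 v hv w hw).2; linarith
          exact (convex_convexHull ℝ _).segment_subset
            (subset_convexHull ℝ _ (Finset.mem_filter.mp hv).1)
            (subset_convexHull ℝ _ (Finset.mem_filter.mp hw).1) hseg
        · exact le_of_eq (hfp v hv w hw)
    · exact ((convex_convexHull ℝ _).inter ((convex_Iic (0:ℝ)).affine_preimage f))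
  -- ⊆ direction
  rintro x ⟨hx, hfx⟩
  rw [Finset.convexHull_eq] at hx
  obtain ⟨a, ha0, ha1, hxc⟩ := hx
  rw [Finset.centerMass_eq_of_sum_1 _ _ ha1] at hxc
  simp only [id] at hxc
  -- partition V into L (f ≤ 0) and H (f > 0), and L into L0 (f = 0) and Ln (f < 0)
  have hVLH : L ∪ H = V := by
    ext y
    simp only [hLdef, hHdef, Finset.mem_union, Finset.mem_filter]
    constructor
    · rintro (h | h) <;> exact h.1
    · intro hy
      rcases le_or_gt (f y) 0 with h | h
      · exact Or.inl ⟨hy, h⟩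
      · exact Or.inr ⟨hy, h⟩
  have hdisjLH : Disjoint L H := by
    rw [Finset.disjoint_left]
    intro y hy hy'
    have h1 := (Finset.mem_filter.mp hy).2
    have h2 := (Finset.mem_filter.mp hy').2
    linarith
  have hL0Ln : L0 ∪ Ln = L := by
    ext y
    simp only [hLdef, hL0def, hLndef, Finset.mem_union, Finset.mem_filter]
    constructor
    · rintro (h | h)
      · exact ⟨h.1, le_of_eq h.2⟩
      · exact ⟨h.1, le_of_lt h.2⟩
    · rintro ⟨hy, h⟩
      rcases eq_or_lt_of_le h with h' | h'
      · exact Or.inl ⟨hy, h'⟩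
      · exact Or.inr ⟨hy, h'⟩
  have hdisj0n : Disjoint L0 Ln := by
    rw [Finset.disjoint_left]
    intro y hy hy'
    have h1 := (Finset.mem_filter.mp hy).2
    have h2 := (Finset.mem_filter.mp hy').2
    linarith [h1 ▸ h2]
  have hLV : L ⊆ V := Finset.filter_subset _ _
  have hLnV : Ln ⊆ V := Finset.filter_subset _ _
  have hL0V : L0 ⊆ V := Finset.filter_subset _ _
  have hHV : H ⊆ V := Finset.filter_subset _ _
  have hLW : L ⊆ W := Finset.subset_union_left
  have hL0L : L0 ⊆ L := hL0Ln ▸ Finset.subset_union_left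
  have hLnL : Ln ⊆ L := hL0Ln ▸ Finset.subset_union_right
  by_cases hHz : ∀ w ∈ H, a w = 0
  · -- all mass on L
    have hsumL : ∑ y ∈ L, a y = 1 := by
      rw [← hVLH, Finset.sum_union hdisjLH, Finset.sum_eq_zero hHz, add_zero] at ha1
      exact ha1
    have hxL : ∑ y ∈ L, a y • y = x := by
      rw [← hVLH, Finset.sum_union hdisjLH] at hxc
      have h3 : ∑ y ∈ H, a y • y = 0 :=
        Finset.sum_eq_zero (fun y hy => by rw [hHz y hy, zero_smul])
      rw [h3, add_zero] at hxc
      exact hxc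
    apply convexHull_mono (Finset.coe_subset.mpr hLW)
    have := L.centerMass_mem_convexHull (w := a) (z := id)
      (fun y hy => ha0 y (hLV hy)) (by rw [hsumL]; exact one_pos)
      (fun y hy => Finset.mem_coe.mpr hy)
    rwa [Finset.centerMass_eq_of_sum_1 _ _ hsumL,
      show (∑ y ∈ L, a y • id y) = x from hxL] at this
  · push_neg at hHz
    obtain ⟨w₀, hw₀H, hw₀⟩ := hHz
    set Bv : ℝ := ∑ w ∈ H, a w * f w with hBdef
    set Av : ℝ := ∑ v ∈ Ln, a v * (-f v) with hAdef
    have hB : 0 < Bv := by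
      apply Finset.sum_pos'
      · intro w hw
        exact mul_nonneg (ha0 w (hHV hw)) (le_of_lt (Finset.mem_filter.mp hw).2)
      · exact ⟨w₀, hw₀H, mul_pos (lt_of_le_of_ne (ha0 w₀ (hHV hw₀H)) (Ne.symm hw₀))
          (Finset.mem_filter.mp hw₀H).2⟩
    have hfxsum : f x = ∑ y ∈ V, a y * f y := by
      rw [← hxc]; exact affine_apply_sum_s7 f V a _ ha1
    have hL0zero : ∑ y ∈ L0, a y * f y = 0 :=
      Finset.sum_eq_zero (fun y hy => by rw [(Finset.mem_filter.mp hy).2, mul_zero])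
    have hLnsum : ∑ y ∈ Ln, a y * f y = -Av := by
      rw [hAdef, ← Finset.sum_neg_distrib]
      apply Finset.sum_congr rfl
      intro y _; ring
    have hfx2 : f x = -Av + Bv := by
      rw [hfxsum, ← hVLH, Finset.sum_union hdisjLH, ← hL0Ln, Finset.sum_union hdisj0n,
        hL0zero, hLnsum, zero_add]
    have hBA : Bv ≤ Av := by
      have hfx0 : f x ≤ 0 := hfx
      linarith [hfx2 ▸ hfx0]
    have hA : 0 < Av := lt_of_lt_of_le hB hBA
    have hA' : Av ≠ 0 := ne_of_gt hA
    have hAvsum : ∑ v ∈ Ln, a v * (-f v) = Av := rfl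
    rw [mem_convexHull_iff_exists_fintype]
    refine ⟨({y // y ∈ L0} ⊕ {y // y ∈ Ln} ⊕ {q // q ∈ Ln ×ˢ H}), inferInstance,
      Sum.elim (fun y => a y.1)
        (Sum.elim (fun v => a v.1 * (1 - Bv / Av))
          (fun q => a q.1.1 * a q.1.2 * (f q.1.2 - f q.1.1) / Av)),
      Sum.elim (fun y => y.1)
        (Sum.elim (fun v => v.1) (fun q => p q.1.1 q.1.2)), ?_, ?_, ?_, ?_⟩
    · rintro (y | v | q)
      · exact ha0 y.1 (hL0V y.2)
      · simp only [Sum.elim_inl, Sum.elim_inr]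
        apply mul_nonneg (ha0 v.1 (hLnV v.2))
        have : Bv / Av ≤ 1 := (div_le_one hA).mpr hBA
        linarith
      · simp only [Sum.elim_inl, Sum.elim_inr]
        obtain ⟨hq1, hq2⟩ := Finset.mem_product.mp q.2
        apply div_nonneg _ hA.le
        apply mul_nonneg (mul_nonneg (ha0 _ (hLnV hq1)) (ha0 _ (hHV hq2)))
        have h1 : f q.1.1 < 0 := (Finset.mem_filter.mp hq1).2
        have h2 : 0 < f q.1.2 := (Finset.mem_filter.mp hq2).2
        linarith
    · -- sum of weights = 1
      rw [Fintype.sum_sum_type, Fintype.sum_sum_type]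
      simp only [Sum.elim_inl, Sum.elim_inr]
      rw [Finset.sum_coe_sort L0 (fun y => a y),
        Finset.sum_coe_sort Ln (fun v => a v * (1 - Bv / Av)),
        Finset.sum_coe_sort (Ln ×ˢ H) (fun q => a q.1 * a q.2 * (f q.2 - f q.1) / Av)]
      have hS3 : ∑ q ∈ Ln ×ˢ H, a q.1 * a q.2 * (f q.2 - f q.1) / Av
          = (∑ v ∈ Ln, a v) * (Bv / Av) + ∑ w ∈ H, a w := by
        rw [Finset.sum_product]
        have inner : ∀ v ∈ Ln, ∑ w ∈ H, a v * a w * (f w - f v) / Av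
            = (a v * (Bv / Av)) + ((a v * (-f v) / Av) * ∑ w ∈ H, a w) := by
          intro v hv
          have hpt : ∀ w ∈ H, a v * a w * (f w - f v) / Av
              = (a v / Av) * (a w * f w) + (a v * (-f v) / Av) * a w := by
            intro w _; field_simp; ring
          rw [Finset.sum_congr rfl hpt, Finset.sum_add_distrib,
            ← Finset.mul_sum, ← Finset.mul_sum, ← hBdef]
          congr 1
          field_simp
        rw [Finset.sum_congr rfl inner, Finset.sum_add_distrib, ← Finset.sum_mul,
          ← Finset.sum_mul]
        have hone : ∑ i ∈ Ln, a i * -f i / Av = 1 := by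
          rw [← Finset.sum_div, hAvsum, div_self hA']
        rw [hone, one_mul]
      rw [hS3]
      rw [← hVLH, Finset.sum_union hdisjLH, ← hL0Ln, Finset.sum_union hdisj0n] at ha1
      have expand : ∑ v ∈ Ln, a v * (1 - Bv / Av)
          = (∑ v ∈ Ln, a v) - (∑ v ∈ Ln, a v) * (Bv / Av) := by
        rw [Finset.sum_mul, ← Finset.sum_sub_distrib]
        apply Finset.sum_congr rfl
        intro v _; ring
      rw [expand]
      linarith [ha1]
    · rintro (y | v | q)
      · exact Finset.mem_coe.mpr (hLW (hL0L y.2))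
      · exact Finset.mem_coe.mpr (hLW (hLnL v.2))
      · simp only [Sum.elim_inl, Sum.elim_inr]
        apply Finset.mem_coe.mpr
        rw [hWdef]
        apply Finset.mem_union_right
        exact Finset.mem_image.mpr ⟨q.1, q.2, rfl⟩
    · -- the vector sum equals x
      rw [Fintype.sum_sum_type, Fintype.sum_sum_type]
      simp only [Sum.elim_inl, Sum.elim_inr]
      rw [Finset.sum_coe_sort L0 (fun y => a y • y),
        Finset.sum_coe_sort Ln (fun v => (a v * (1 - Bv / Av)) • v),
        Finset.sum_coe_sort (Ln ×ˢ H)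
          (fun q => (a q.1 * a q.2 * (f q.2 - f q.1) / Av) • p q.1 q.2)]
      have key : ∀ q ∈ Ln ×ˢ H, (a q.1 * a q.2 * (f q.2 - f q.1) / Av) • p q.1 q.2
          = (a q.1 * a q.2 * f q.2 / Av) • q.1 + (a q.1 * a q.2 * (-f q.1) / Av) • q.2 := by
        rintro ⟨v, w⟩ hq
        obtain ⟨hv, hw⟩ := Finset.mem_product.mp hq
        have hd' : f v - f w ≠ 0 := ne_of_lt (hdenom v hv w hw)
        simp only [hpdef]
        rw [smul_add, smul_smul, smul_smul]
        congr 1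
        · congr 1; field_simp; ring
        · congr 1; field_simp; ring
      rw [Finset.sum_congr rfl key, Finset.sum_add_distrib]
      have hsum1 : ∑ q ∈ Ln ×ˢ H, (a q.1 * a q.2 * f q.2 / Av) • q.1
          = ∑ v ∈ Ln, (a v * (Bv / Av)) • v := by
        rw [Finset.sum_product]
        apply Finset.sum_congr rfl
        intro v _
        rw [← Finset.sum_smul]
        congr 1
        have : ∀ w ∈ H, a v * a w * f w / Av = (a v / Av) * (a w * f w) := by
          intro w _; ring
        rw [Finset.sum_congr rfl this, ← Finset.mul_sum, ← hBdef]
        ring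
      have hsum2 : ∑ q ∈ Ln ×ˢ H, (a q.1 * a q.2 * (-f q.1) / Av) • q.2
          = ∑ w ∈ H, a w • w := by
        rw [Finset.sum_product_right]
        apply Finset.sum_congr rfl
        intro w _
        rw [← Finset.sum_smul]
        congr 1
        have : ∀ v ∈ Ln, a v * a w * (-f v) / Av = (a w / Av) * (a v * (-f v)) := by
          intro v _; ring
        rw [Finset.sum_congr rfl this, ← Finset.mul_sum, hAvsum]
        field_simp
      rw [hsum1, hsum2]
      have hcombine : ∑ v ∈ Ln, (a v * (1 - Bv / Av)) • v + ∑ v ∈ Ln, (a v * (Bv / Av)) • v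
          = ∑ v ∈ Ln, a v • v := by
        rw [← Finset.sum_add_distrib]
        apply Finset.sum_congr rfl
        intro v _
        rw [← add_smul]
        congr 1
        field_simp
        ring
      rw [← hVLH, Finset.sum_union hdisjLH, ← hL0Ln, Finset.sum_union hdisj0n] at hxc
      rw [← hxc, ← hcombine]
      abel

/-- A polytope intersected with finitely many closed halfspaces is a polytope. -/
lemma polytope_inter_halfspaces (F : Set ((Fin n → ℝ) →ᵃ[ℝ] ℝ)) (hF : F.Finite) :
    ∀ s : Set (Fin n → ℝ), IsPolytope s → IsPolytope (s ∩ ⋂ f ∈ F, {x | f x ≤ 0}) := by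
  refine Set.Finite.induction_on _ hF ?_ ?_
  · intro s hs
    simpa using hs
  · intro g F' _ _ ih s hs
    obtain ⟨V, rfl⟩ := hs
    obtain ⟨W, hW⟩ := polytope_cut V g
    have : (convexHull ℝ (V : Set (Fin n → ℝ))) ∩ ⋂ f ∈ insert g F', {x | f x ≤ 0}
        = (convexHull ℝ (W : Set (Fin n → ℝ))) ∩ ⋂ f ∈ F', {x | f x ≤ 0} := by
      rw [Set.biInter_insert, ← hW]
      ext x; simp only [Set.mem_inter_iff, Set.mem_setOf_eq]; tauto
    rw [this]
    exact ih _ ⟨W, rfl⟩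

/-- A simplex (convex hull of an affinely independent finite set) is a finite
intersection of closed halfspaces. -/
lemma simplex_halfspaces (V : Finset (Fin n → ℝ))
    (hV : AffineIndependent ℝ (fun x : {x : Fin n → ℝ // x ∈ V} => x.val)) :
    ∃ F : Set ((Fin n → ℝ) →ᵃ[ℝ] ℝ), F.Finite ∧
      convexHull ℝ (V : Set (Fin n → ℝ)) = ⋂ f ∈ F, {x | 0 ≤ f x} := by
  classical
  rcases V.eq_empty_or_nonempty with rfl | hne
  · refine ⟨{AffineMap.const ℝ (Fin n → ℝ) (-1 : ℝ)}, Set.finite_singleton _, ?_⟩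
    rw [Finset.coe_empty, convexHull_empty]
    symm
    rw [Set.eq_empty_iff_forall_notMem]
    intro x hx
    have := Set.mem_iInter₂.mp hx (AffineMap.const ℝ (Fin n → ℝ) (-1 : ℝ)) rfl
    norm_num [AffineMap.const_apply] at this
  · -- extend to an affine basis
    have hV' : AffineIndependent ℝ (fun p : (V : Set (Fin n → ℝ)) => (p : Fin n → ℝ)) := by
      exact hV
    obtain ⟨t, hVt, hti, htt⟩ := exists_subset_affineIndependent_affineSpan_eq_top hV'
    have htfin : t.Finite := finite_set_of_fin_dim_affineIndependent ℝ hti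
    haveI : Fintype t := htfin.fintype
    let b : AffineBasis t ℝ (Fin n → ℝ) :=
      ⟨fun i => (i : Fin n → ℝ), hti, by rwa [Subtype.range_coe]⟩
    have hb : ∀ i : t, b i = (i : Fin n → ℝ) := fun i => rfl
    refine ⟨(fun i : t => b.coord i) '' Set.univ ∪
      (fun i : t => -(b.coord i)) '' {i : t | (i : Fin n → ℝ) ∉ V},
      ((Set.finite_univ).image _).union ((Set.toFinite _).image _), ?_⟩
    have hmem : ∀ x, (x ∈ ⋂ f ∈ ((fun i : t => b.coord i) '' Set.univ ∪
        (fun i : t => -(b.coord i)) '' {i : t | (i : Fin n → ℝ) ∉ V}), {x | 0 ≤ f x}) ↔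
        ((∀ i : t, 0 ≤ b.coord i x) ∧ ∀ i : t, (i : Fin n → ℝ) ∉ V → b.coord i x = 0) := by
      intro x
      simp only [Set.mem_iInter, Set.mem_union, Set.mem_image, Set.mem_univ, Set.mem_setOf_eq]
      constructor
      · intro h
        constructor
        · intro i; exact h _ (Or.inl ⟨i, trivial, rfl⟩)
        · intro i hi
          have h1 := h _ (Or.inl ⟨i, trivial, rfl⟩)
          have h2 := h _ (Or.inr ⟨i, hi, rfl⟩)
          simp only [AffineMap.coe_neg, Pi.neg_apply, neg_nonneg] at h2
          linarith
      · rintro ⟨h1, h2⟩ f (⟨i, -, rfl⟩ | ⟨i, hi, rfl⟩)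
        · exact h1 i
        · simp only [AffineMap.coe_neg, Pi.neg_apply, neg_nonneg]
          rw [h2 i hi]
      
    ext x
    rw [hmem x]
    constructor
    · -- x in hull → coords nonneg, vanish off V
      intro hx
      rw [Finset.convexHull_eq] at hx
      obtain ⟨a, ha0, ha1, hxc⟩ := hx
      rw [Finset.centerMass_eq_of_sum_1 _ _ ha1] at hxc
      simp only [id] at hxc
      have hcoord : ∀ i : t, b.coord i x = (if (i : Fin n → ℝ) ∈ V then a i else 0) := by
        intro i
        rw [← hxc, affine_apply_sum_s7 (b.coord i) V a _ ha1]
        have : ∀ y ∈ V, a y * (b.coord i) y = (if (i : Fin n → ℝ) = y then a y else 0) := by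
          intro y hy
          have : (b.coord i) y = (b.coord i) (b ⟨y, hVt hy⟩) := rfl
          rw [this, AffineBasis.coord_apply]
          by_cases h : (i : Fin n → ℝ) = y
          · rw [if_pos (Subtype.ext h : i = ⟨y, hVt hy⟩), if_pos h, mul_one]
          · rw [if_neg (fun hh => h (by rw [hh])), if_neg h, mul_zero]
        rw [Finset.sum_congr rfl this, Finset.sum_ite_eq V (i : Fin n → ℝ) a]
      constructor
      · intro i
        rw [hcoord i]
        split_ifs with h
        · exact ha0 _ h
        · exact le_refl 0
      · intro i hi
        rw [hcoord i, if_neg hi]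
    · -- coords nonneg and vanish off V → x in hull
      rintro ⟨h1, h2⟩
      have hx : x = ∑ i : t, b.coord i x • (i : Fin n → ℝ) := by
        have := b.affineCombination_coord_eq_self x
        rwa [Finset.univ.affineCombination_eq_linear_combination _ _
          (b.sum_coord_apply_eq_one x), eq_comm] at this
      set T : Finset t := Finset.univ.filter (fun i : t => (i : Fin n → ℝ) ∈ V) with hT
      have hsumT : ∑ i ∈ T, b.coord i x = 1 := by
        rw [hT, Finset.sum_filter_of_ne, b.sum_coord_apply_eq_one x]
        intro i _ hi
        by_contra h
        exact hi (h2 i h)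
      have hxT : ∑ i ∈ T, b.coord i x • (i : Fin n → ℝ) = x := by
        rw [hT, Finset.sum_filter_of_ne, ← hx]
        intro i _ hi
        by_contra h
        rw [h2 i h, zero_smul] at hi
        exact hi rfl
      have := T.centerMass_mem_convexHull (w := fun i => b.coord i x)
        (z := fun i => (i : Fin n → ℝ)) (fun i _ => h1 i)
        (by rw [hsumT]; exact one_pos)
        (fun i hi => Finset.mem_coe.mpr ((Finset.mem_filter.mp hi).2))
      rwa [Finset.centerMass_eq_of_sum_1 _ _ hsumT, hxT] at this

lemma closure_inter_halfspaces (C : Set (Fin n → ℝ)) (hC : Convex ℝ C) (hCc : IsClosed C)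
    (F : Set ((Fin n → ℝ) →ᵃ[ℝ] ℝ)) :
    closure (C ∩ ⋂ f ∈ F, {x | f x < 0}) = ∅ ∨
    closure (C ∩ ⋂ f ∈ F, {x | f x < 0}) = C ∩ ⋂ f ∈ F, {x | f x ≤ 0} := by
  rcases Set.eq_empty_or_nonempty (C ∩ ⋂ f ∈ F, {x | f x < 0}) with he | ⟨y, hy⟩
  · left; rw [he, closure_empty]
  · right
    obtain ⟨hyC, hyF⟩ := hy
    rw [Set.mem_iInter₂] at hyF
    apply Set.Subset.antisymm
    · apply closure_minimal
      · intro z hz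
        refine ⟨hz.1, ?_⟩
        rw [Set.mem_iInter₂]
        intro f hf
        have hlt : f z < 0 := Set.mem_iInter₂.mp hz.2 f hf
        exact le_of_lt hlt
      · apply hCc.inter
        apply isClosed_biInter
        intro f _
        have : IsClosed {x : Fin n → ℝ | f x ≤ 0} :=
          isClosed_le f.continuous_of_finiteDimensional continuous_const
        exact this
    · rintro x ⟨hxC, hxF⟩
      rw [Set.mem_iInter₂] at hxF
      apply mem_closure_of_frequently_of_tendsto (b := (Filter.atTop : Filter ℕ))
        (f := fun k : ℕ => (1 - (1 : ℝ)/(k+1)) • x + ((1 : ℝ)/(k+1)) • y)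
      · apply Filter.Frequently.of_forall
        intro k
        have hk0 : (0:ℝ) < 1/(k+1) := by positivity
        have hk1 : (1:ℝ)/(k+1) ≤ 1 := by
          rw [div_le_one (by positivity)]
          linarith [Nat.cast_nonneg (α := ℝ) k]
        constructor
        · exact hC hxC hyC (by linarith) hk0.le (by ring)
        · rw [Set.mem_iInter₂]
          intro f hf
          rw [Set.mem_setOf_eq, affine_apply_combo2 f _ _ (by ring)]
          have h1 : f x ≤ 0 := hxF f hf
          have h2 : f y < 0 := hyF f hf
          nlinarith
      · have hg : Continuous (fun c : ℝ => (1 - c) • x + c • y) := by continuity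
        have hε : Filter.Tendsto (fun k : ℕ => (1 : ℝ)/(k+1)) Filter.atTop (nhds 0) :=
          tendsto_one_div_add_atTop_nhds_zero_nat
        have := (hg.tendsto 0).comp hε
        simpa [Function.comp_def] using this

/-- The closure of a difference of polyhedra is a polyhedron. -/
lemma isPolyhedron_closure_diff (A B : Set (Fin n → ℝ)) (hA : IsPolyhedron A)
    (hB : IsPolyhedron B) : IsPolyhedron (closure (B \ A)) := by
  classical
  obtain ⟨SA, hSAfin, hSApoly, rfl⟩ := hA
  obtain ⟨SB, hSBfin, hSBpoly, rfl⟩ := hB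
  -- Step 1: refine SA into simplices, each an intersection of closed halfspaces
  have step1 : ∃ 𝒮 : Set (Set (Fin n → ℝ)), 𝒮.Finite ∧
      (∀ s ∈ 𝒮, ∃ F : Set ((Fin n → ℝ) →ᵃ[ℝ] ℝ), F.Finite ∧ s = ⋂ f ∈ F, {x | 0 ≤ f x}) ∧
      ⋃₀ SA = ⋃₀ 𝒮 := by
    have hrep : ∀ s ∈ SA, ∃ 𝒯 : Set (Set (Fin n → ℝ)), 𝒯.Finite ∧
        (∀ u ∈ 𝒯, ∃ F : Set ((Fin n → ℝ) →ᵃ[ℝ] ℝ), F.Finite ∧ u = ⋂ f ∈ F, {x | 0 ≤ f x}) ∧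
        s = ⋃₀ 𝒯 := by
      intro s hs
      obtain ⟨V, rfl⟩ := hSApoly s hs
      refine ⟨(fun t : Finset (Fin n → ℝ) => convexHull ℝ (t : Set (Fin n → ℝ))) ''
        {t : Finset (Fin n → ℝ) | t ⊆ V ∧
          AffineIndependent ℝ (fun x : {x : Fin n → ℝ // x ∈ t} => x.val)}, ?_, ?_, ?_⟩
      · apply Set.Finite.image
        apply Set.Finite.subset (V.powerset.finite_toSet)
        intro t ht
        simpa using ht.1
      · rintro u ⟨t, ⟨-, hai⟩, rfl⟩
        exact simplex_halfspaces t hai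
      · rw [convexHull_eq_union (𝕜 := ℝ) (s := (V : Set (Fin n → ℝ)))]
        ext x
        simp only [Set.mem_iUnion, Set.mem_sUnion, Set.mem_image, Set.mem_setOf_eq]
        constructor
        · rintro ⟨t, hts, hai, hx⟩
          exact ⟨convexHull ℝ (t : Set (Fin n → ℝ)), ⟨t, ⟨Finset.coe_subset.mp hts, hai⟩, rfl⟩, hx⟩
        · rintro ⟨u, ⟨t, ⟨hts, hai⟩, rfl⟩, hx⟩
          exact ⟨t, Finset.coe_subset.mpr hts, hai, hx⟩
    choose 𝒯 h𝒯fin h𝒯rep h𝒯eq using hrep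
    refine ⟨⋃ s ∈ SA, ⋃ (hs : s ∈ SA), 𝒯 s hs, ?_, ?_, ?_⟩
    · apply hSAfin.biUnion
      intro s hs
      exact Set.finite_iUnion (fun _ => h𝒯fin s hs)
    · intro u hu
      simp only [Set.mem_iUnion] at hu
      obtain ⟨s, hs, hs', hu⟩ := hu
      exact h𝒯rep s hs' u hu
    · ext x
      simp only [Set.mem_sUnion, Set.mem_iUnion]
      constructor
      · rintro ⟨s, hs, hx⟩
        rw [h𝒯eq s hs] at hx
        obtain ⟨u, hu, hx⟩ := hx
        exact ⟨u, ⟨s, hs, hs, hu⟩, hx⟩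
      · rintro ⟨u, ⟨s, hs, hs', hu⟩, hx⟩
        exact ⟨s, hs, (h𝒯eq s hs').symm ▸ ⟨u, hu, hx⟩⟩
  obtain ⟨𝒮, h𝒮fin, h𝒮rep, h𝒮eq⟩ := step1
  rw [h𝒮eq]
  -- Step 2: the complement of ⋃₀ 𝒮 is a finite union of finite intersections of
  -- open halfspaces
  have step2 : ∀ 𝒮' : Set (Set (Fin n → ℝ)), 𝒮'.Finite →
      (∀ s ∈ 𝒮', ∃ F : Set ((Fin n → ℝ) →ᵃ[ℝ] ℝ), F.Finite ∧ s = ⋂ f ∈ F, {x | 0 ≤ f x}) →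
      ∃ 𝒪 : Set (Set (Fin n → ℝ)), 𝒪.Finite ∧
        (∀ O ∈ 𝒪, ∃ F : Set ((Fin n → ℝ) →ᵃ[ℝ] ℝ), F.Finite ∧ O = ⋂ f ∈ F, {x | f x < 0}) ∧
        (⋃₀ 𝒮')ᶜ = ⋃₀ 𝒪 := by
    intro 𝒮' h𝒮'fin
    refine Set.Finite.induction_on _ h𝒮'fin ?_ ?_
    · intro _
      refine ⟨{Set.univ}, Set.finite_singleton _, ?_, by simp⟩
      rintro O rfl
      exact ⟨∅, Set.finite_empty, by simp⟩
    · rintro s 𝒮'' - - ih hrep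
      obtain ⟨𝒪, h𝒪fin, h𝒪good, h𝒪eq⟩ := ih (fun u hu => hrep u (Set.mem_insert_of_mem _ hu))
      obtain ⟨F, hFfin, hFeq⟩ := hrep s (Set.mem_insert _ _)
      refine ⟨Set.image2 (fun f O => {x | f x < 0} ∩ O) F 𝒪, Set.Finite.image2 _ hFfin h𝒪fin,
        ?_, ?_⟩
      · rintro O' ⟨f, hf, O, hO, rfl⟩
        obtain ⟨G, hGfin, hGeq⟩ := h𝒪good O hO
        refine ⟨insert f G, hGfin.insert f, ?_⟩
        rw [Set.biInter_insert, hGeq]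
      · have hcompl : sᶜ = ⋃ f ∈ F, {x | f x < 0} := by
          rw [hFeq]
          ext x
          simp only [Set.mem_compl_iff, Set.mem_iInter, Set.mem_iUnion, Set.mem_setOf_eq,
            not_forall, not_le]
        rw [Set.sUnion_insert, Set.compl_union, h𝒪eq, hcompl]
        ext x
        simp only [Set.mem_inter_iff, Set.mem_iUnion, Set.mem_sUnion, Set.mem_image2,
          Set.mem_setOf_eq]
        constructor
        · rintro ⟨⟨f, hf, hfx⟩, O, hO, hOx⟩
          exact ⟨_, ⟨f, hf, O, hO, rfl⟩, hfx, hOx⟩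
        · rintro ⟨O', ⟨f, hf, O, hO, rfl⟩, hfx, hOx⟩
          exact ⟨⟨f, hf, hfx⟩, O, hO, hOx⟩
  obtain ⟨𝒪, h𝒪fin, h𝒪good, h𝒪eq⟩ := step2 𝒮 h𝒮fin h𝒮rep
  -- Step 3: closure of the difference
  have hdiff : ⋃₀ SB \ ⋃₀ 𝒮 = ⋃ C ∈ SB, ⋃ O ∈ 𝒪, C ∩ O := by
    rw [Set.diff_eq, h𝒪eq]
    ext x
    simp only [Set.mem_inter_iff, Set.mem_sUnion, Set.mem_iUnion]
    constructor
    · rintro ⟨⟨C, hC, hCx⟩, O, hO, hOx⟩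
      exact ⟨C, hC, O, hO, hCx, hOx⟩
    · rintro ⟨C, hC, O, hO, hCx, hOx⟩
      exact ⟨⟨C, hC, hCx⟩, O, hO, hOx⟩
  rw [hdiff, hSBfin.closure_biUnion]
  have hstep : ∀ C ∈ SB, closure (⋃ O ∈ 𝒪, C ∩ O) = ⋃ O ∈ 𝒪, closure (C ∩ O) :=
    fun C _ => h𝒪fin.closure_biUnion _
  rw [Set.iUnion₂_congr hstep]
  -- Step 4: each closure (C ∩ O) is a polytope
  have hpoly : ∀ C ∈ SB, ∀ O ∈ 𝒪, IsPolytope (closure (C ∩ O)) := by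
    intro C hC O hO
    obtain ⟨V, rfl⟩ := hSBpoly C hC
    obtain ⟨F, hFfin, rfl⟩ := h𝒪good O hO
    have hconv : Convex ℝ (convexHull ℝ (V : Set (Fin n → ℝ))) := convex_convexHull ℝ _
    have hclosed : IsClosed (convexHull ℝ (V : Set (Fin n → ℝ))) :=
      (V.finite_toSet.isCompact_convexHull ℝ).isClosed
    rcases closure_inter_halfspaces _ hconv hclosed F with h | h
    · rw [h]
      exact ⟨∅, by simp⟩
    · rw [h]
      exact polytope_inter_halfspaces F hFfin _ ⟨V, rfl⟩
  -- Step 5: conclude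
  refine ⟨Set.image2 (fun C O => closure (C ∩ O)) SB 𝒪, Set.Finite.image2 _ hSBfin h𝒪fin, ?_, ?_⟩
  · rintro u ⟨C, hC, O, hO, rfl⟩
    exact hpoly C hC O hO
  · ext x
    simp only [Set.mem_iUnion, Set.mem_sUnion, Set.mem_image2]
    constructor
    · rintro ⟨C, hC, O, hO, hx⟩
      exact ⟨_, ⟨C, hC, O, hO, rfl⟩, hx⟩
    · rintro ⟨u, ⟨C, hC, O, hO, rfl⟩, hx⟩
      exact ⟨C, hC, O, hO, hx⟩

lemma IsPolyhedron.isClosed {P : Set (Fin n → ℝ)} (hP : IsPolyhedron P) : IsClosed P := by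
  obtain ⟨S, hfin, hpoly, rfl⟩ := hP
  rw [Set.sUnion_eq_biUnion]
  apply hfin.isClosed_biUnion
  intro s hs
  obtain ⟨V, rfl⟩ := hpoly s hs
  exact (V.finite_toSet.isCompact_convexHull ℝ).isClosed

lemma intSub_eq (P S : Set (Fin n → ℝ)) : intSub P S = P \ closure (P \ S) := by
  unfold intSub
  have h1 : (interior (Subtype.val ⁻¹' S : Set P)) =
      (closure (Subtype.val ⁻¹' Sᶜ : Set P))ᶜ := by
    rw [Set.preimage_compl, closure_compl, compl_compl]
  have h2 : P ∩ Sᶜ = P \ S := (Set.diff_eq _ _).symm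
  rw [h1]
  ext y
  simp only [Set.mem_image, Set.mem_compl_iff, Set.mem_diff]
  constructor
  · rintro ⟨x, hx, rfl⟩
    refine ⟨x.2, ?_⟩
    intro hy
    apply hx
    rw [closure_subtype]
    rwa [Subtype.image_preimage_coe, h2]
  · rintro ⟨hyP, hy⟩
    refine ⟨⟨y, hyP⟩, ?_, rfl⟩
    rw [closure_subtype, Subtype.image_preimage_coe, h2]
    exact hy


end AuxiliaryLemmas

/-- If `U`, `V` are open subpolyhedra of a polyhedron `P ⊆ ℝⁿ`, then the
Heyting implication `int_P ((P \ U) ∪ V)` (interior in the subspace topology of `P`) is again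
an open subpolyhedron of `P`; hence the open subpolyhedra of `P` form a Heyting subalgebra of
the opens of `P`. -/
theorem himp_open_subpoly {n : ℕ} (P U V : Set (Fin n → ℝ)) (hP : IsPolyhedron P)
    (hU : IsOpenSubpoly P U) (hV : IsOpenSubpoly P V) :
    IsOpenSubpoly P (intSub P ((P \ U) ∪ V)) := by
  have hPS : P \ ((P \ U) ∪ V) = (P \ V) \ (P \ U) := by
    ext x
    simp only [Set.mem_diff, Set.mem_union, not_or, Set.mem_diff]
    tauto
  rw [intSub_eq, hPS]
  constructor
  · exact Set.diff_subset
  · rw [Set.diff_diff_right_self]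
    have hcl : closure ((P \ V) \ (P \ U)) ⊆ P := by
      apply closure_minimal _ hP.isClosed
      intro x hx
      exact hx.1.1
    rw [Set.inter_eq_self_of_subset_right hcl]
    exact isPolyhedron_closure_diff (P \ U) (P \ V) hU.2 hV.2
end
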